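/- arXiv:1508.07914 — 9 statements merged into one kernel-verified Lean document; each statement's English description precedes it below -/
import Mathlib

section
/- For every constant C > 1 there exists a function γ : (0,∞) → [0,∞) with γ(ε) → 0 as ε → 0 such that the following holds: for every ε > 0, every σ ∈ [1/C, C], and every pair of real random variables ξ, η defined on a common probability space such that the law of η is the Gaussian measure N(0, σ²) and E[(ξ − η)²] ≤ ε, one has (|p| ∨ 1) · |P(ξ > p) − P(η > p)| ≤ γ(ε) for every p ∈ ℝ. -/
open MeasureTheory ProbabilityTheory Filter Set Real
open scoped NNReal ENNReal



lemma aux_int_exp {c : ℝ} (hc : 0 < c) (a : ℝ) :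
    ∫ x in Ioi a, rexp (-(c * x)) = rexp (-(c * a)) / c := by
  have := MeasureTheory.integral_comp_mul_left_Ioi (fun y => rexp (-y)) a hc
  simp only [smul_eq_mul] at this
  rw [this, integral_exp_neg_Ioi]
  rw [inv_mul_eq_div]

lemma aux_pdf_le {C : ℝ} (hC : 1 < C) {v : ℝ≥0} (hv1 : 1/C^2 ≤ (v:ℝ)) (hv2 : (v:ℝ) ≤ C^2)
    (x : ℝ) : gaussianPDFReal 0 v x ≤ C * rexp (-x^2 / (2*C^2)) := by
  have hC0 : (0:ℝ) < C := by linarith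
  have hv0 : (0:ℝ) < (v:ℝ) := lt_of_lt_of_le (by positivity) hv1
  rw [gaussianPDFReal]
  have h1 : (√(2 * π * v))⁻¹ ≤ C := by
    rw [inv_le_comm₀ (Real.sqrt_pos.2 (by positivity)) hC0]
    rw [Real.le_sqrt' (by positivity)]
    calc (C⁻¹)^2 = 1/C^2 := by rw [inv_pow]; ring
    _ ≤ (v:ℝ) := hv1
    _ ≤ 2 * π * v := by nlinarith [Real.pi_gt_three]
  have h2 : rexp (- (x - 0)^2 / (2 * v)) ≤ rexp (-x^2 / (2*C^2)) := by
    apply Real.exp_le_exp.2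
    rw [sub_zero, neg_div, neg_div, neg_le_neg_iff]
    apply div_le_div_of_nonneg_left (sq_nonneg x) (by positivity) (by nlinarith)
  exact mul_le_mul h1 h2 (Real.exp_nonneg _) hC0.le

lemma aux_tail_Ioi {C : ℝ} (hC : 1 < C) {v : ℝ≥0} (hv : v ≠ 0) (hv1 : 1/C^2 ≤ (v:ℝ))
    (hv2 : (v:ℝ) ≤ C^2) {t : ℝ} (ht : 0 < t) :
    gaussianReal 0 v (Ioi t) ≤ ENNReal.ofReal (2*C^3/t * rexp (-t^2 / (2*C^2))) := by
  have hC0 : (0:ℝ) < C := by linarith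
  set c : ℝ := t / (2*C^2) with hc_def
  have hc : 0 < c := by positivity
  rw [gaussianReal_apply 0 hv]
  have hbound : ∀ x ∈ Ioi t, gaussianPDF 0 v x ≤ ENNReal.ofReal (C * rexp (-(c * x))) := by
    intro x hx
    apply ENNReal.ofReal_le_ofReal
    calc gaussianPDFReal 0 v x ≤ C * rexp (-x^2 / (2*C^2)) := aux_pdf_le hC hv1 hv2 x
    _ ≤ C * rexp (-(c * x)) := by
        apply mul_le_mul_of_nonneg_left _ hC0.le
        apply Real.exp_le_exp.2
        rw [hc_def, neg_div, div_mul_eq_mul_div, neg_le_neg_iff,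
          div_le_div_iff_of_pos_right (by positivity)]
        nlinarith [mem_Ioi.1 hx]
  calc ∫⁻ x in Ioi t, gaussianPDF 0 v x
      ≤ ∫⁻ x in Ioi t, ENNReal.ofReal (C * rexp (-(c * x))) := by
        apply setLIntegral_mono (by fun_prop) hbound
    _ = ENNReal.ofReal (∫ x in Ioi t, C * rexp (-(c * x))) := by
        rw [MeasureTheory.ofReal_integral_eq_lintegral_ofReal]
        · simpa [neg_mul] using ((exp_neg_integrableOn_Ioi t hc).const_mul C)
        · exact ae_of_all _ (fun x => by positivity)
    _ ≤ ENNReal.ofReal (2*C^3/t * rexp (-t^2 / (2*C^2))) := by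
        apply ENNReal.ofReal_le_ofReal
        rw [MeasureTheory.integral_const_mul, aux_int_exp hc]
        have : rexp (-(c*t)) = rexp (-t^2/(2*C^2)) := by
          rw [hc_def]; congr 1; field_simp
        rw [this]
        rw [div_eq_mul_inv, hc_def, ← mul_assoc]
        have heq : C * (t / (2*C^2))⁻¹ = 2*C^3/t := by
          field_simp
        exact le_of_eq (by rw [mul_right_comm, heq])


lemma aux_pdf_le_const {C : ℝ} (hC : 1 < C) {v : ℝ≥0} (hv1 : 1/C^2 ≤ (v:ℝ))
    (x : ℝ) : gaussianPDFReal 0 v x ≤ C := by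
  have hC0 : (0:ℝ) < C := by linarith
  have hv0 : (0:ℝ) < (v:ℝ) := lt_of_lt_of_le (by positivity) hv1
  rw [gaussianPDFReal]
  have h1 : (√(2 * π * v))⁻¹ ≤ C := by
    rw [inv_le_comm₀ (Real.sqrt_pos.2 (by positivity)) hC0]
    rw [Real.le_sqrt' (by positivity)]
    calc (C⁻¹)^2 = 1/C^2 := by rw [inv_pow]; ring
    _ ≤ (v:ℝ) := hv1
    _ ≤ 2 * π * v := by nlinarith [Real.pi_gt_three]
  calc (√(2 * π * v))⁻¹ * rexp (- (x - 0)^2 / (2 * v)) ≤ C * 1 := by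
        refine mul_le_mul h1 (Real.exp_le_one_iff.2 ?_) (Real.exp_nonneg _) hC0.le
        have := sq_nonneg (x - 0)
        have h2v : (0:ℝ) < 2 * v := by positivity
        rw [neg_div]
        simp only [neg_nonpos]
        positivity
  _ = C := mul_one C

lemma aux_Ioc {C : ℝ} (hC : 1 < C) {v : ℝ≥0} (hv : v ≠ 0) (hv1 : 1/C^2 ≤ (v:ℝ))
    {a b : ℝ} (hab : a ≤ b) :
    gaussianReal 0 v (Ioc a b) ≤ ENNReal.ofReal (C * (b - a)) := by
  rw [gaussianReal_apply 0 hv]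
  calc ∫⁻ x in Ioc a b, gaussianPDF 0 v x
      ≤ ∫⁻ _ in Ioc a b, ENNReal.ofReal C := by
        apply lintegral_mono
        intro x
        exact ENNReal.ofReal_le_ofReal (aux_pdf_le_const hC hv1 x)
    _ = ENNReal.ofReal C * volume (Ioc a b) := by rw [setLIntegral_const]
    _ = ENNReal.ofReal (C * (b - a)) := by
        rw [Real.volume_Ioc, ← ENNReal.ofReal_mul (by linarith)]

lemma aux_gauss_symm {v : ℝ≥0} :
    Measure.map (fun x : ℝ => -x) (gaussianReal 0 v) = gaussianReal 0 v := by
  have h := gaussianReal_map_const_mul (μ := 0) (v := v) (-1)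
  have h2 : (⟨(-1:ℝ)^2, sq_nonneg _⟩ : ℝ≥0) = 1 := by
    ext; norm_num
  rw [mul_zero, show (NNReal.mk ((-1:ℝ)^2) _ * v) = v from by ext; simp] at h
  convert h using 2
  funext x
  simp

lemma aux_ici_ioi {v : ℝ≥0} (hv : v ≠ 0) (s : ℝ) :
    gaussianReal 0 v (Ici s) = gaussianReal 0 v (Ioi s) := by
  have hatom : gaussianReal 0 v {s} = 0 :=
    gaussianReal_absolutelyContinuous 0 hv (Real.volume_singleton)
  rw [← Ioi_union_left]
  refine le_antisymm (le_trans (measure_union_le _ _) ?_) (measure_mono subset_union_left)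
  rw [hatom, add_zero]

lemma aux_iic_eq {v : ℝ≥0} (hv : v ≠ 0) (t : ℝ) :
    gaussianReal 0 v (Iic t) = gaussianReal 0 v (Ioi (-t)) := by
  conv_lhs => rw [← aux_gauss_symm (v := v)]
  rw [Measure.map_apply (measurable_neg) measurableSet_Iic]
  have : (fun x : ℝ => -x) ⁻¹' (Iic t) = Ici (-t) := by
    ext x; simp [neg_le]
  rw [this, aux_ici_ioi hv]

lemma aux_cheb {Ω : Type} [MeasurableSpace Ω] {P : Measure Ω}
    {ξ η : Ω → ℝ} (hξ : Measurable ξ) (hη : Measurable η) {ε : ℝ}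
    (hmom : (∫⁻ ω, ENNReal.ofReal ((ξ ω - η ω) ^ 2) ∂P) ≤ ENNReal.ofReal ε)
    {δ : ℝ} (hδ : 0 < δ) :
    P {ω | δ < |ξ ω - η ω|} ≤ ENNReal.ofReal (ε / δ^2) := by
  have hf : AEMeasurable (fun ω => ENNReal.ofReal ((ξ ω - η ω) ^ 2)) P := by fun_prop
  have key := mul_meas_ge_le_lintegral₀ hf (ENNReal.ofReal (δ^2))
  have hsub : {ω | δ < |ξ ω - η ω|} ⊆
      {ω | ENNReal.ofReal (δ^2) ≤ ENNReal.ofReal ((ξ ω - η ω) ^ 2)} := by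
    intro ω hω
    simp only [mem_setOf_eq] at hω ⊢
    apply ENNReal.ofReal_le_ofReal
    nlinarith [sq_abs (ξ ω - η ω), abs_nonneg (ξ ω - η ω)]
  have h1 : ENNReal.ofReal (δ^2) * P {ω | δ < |ξ ω - η ω|} ≤ ENNReal.ofReal ε :=
    le_trans (mul_le_mul_right (measure_mono hsub) _) (le_trans key hmom)
  have hδ2 : ENNReal.ofReal (δ^2) ≠ 0 := by
    simp [ENNReal.ofReal_eq_zero, not_le]
    positivity
  rw [ENNReal.ofReal_div_of_pos (by positivity)]
  rw [ENNReal.le_div_iff_mul_le (Or.inl hδ2) (Or.inl ENNReal.ofReal_ne_top)]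
  rwa [mul_comm]

noncomputable def Mfun (ε : ℝ) : ℝ := max 1 (ε^(-(1/6):ℝ))

noncomputable def gammaFun (C : ℝ) (ε : ℝ) : ℝ :=
  (C+1) * ε^((1:ℝ)/3) * Mfun ε + 6*C^3 * rexp (-(Mfun ε)^2/(8*C^2)) + 4*ε

lemma gammaFun_nonneg {C : ℝ} (hC : 1 < C) {ε : ℝ} (hε : 0 < ε) : 0 ≤ gammaFun C ε := by
  have h1 : (0:ℝ) ≤ ε^((1:ℝ)/3) := Real.rpow_nonneg hε.le _
  have h2 : (0:ℝ) < Mfun ε := lt_of_lt_of_le one_pos (le_max_left _ _)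
  have h3 : (0:ℝ) ≤ rexp (-(Mfun ε)^2/(8*C^2)) := Real.exp_nonneg _
  have hC0 : (0:ℝ) < C := by linarith
  unfold gammaFun
  positivity

lemma rpow_tendsto_zero {q : ℝ} (hq : 0 < q) :
    Tendsto (fun ε : ℝ => ε^q) (nhdsWithin 0 (Ioi 0)) (nhds 0) := by
  have h := (Real.continuousAt_rpow_const 0 q (Or.inr hq.le)).tendsto
  rw [Real.zero_rpow hq.ne'] at h
  exact h.mono_left nhdsWithin_le_nhds

lemma Mfun_tendsto : Tendsto Mfun (nhdsWithin 0 (Ioi 0)) atTop := by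
  apply tendsto_atTop_mono (fun ε => le_max_right 1 (ε^(-(1/6):ℝ)))
  have h1 : Tendsto (fun ε : ℝ => ε^((1:ℝ)/6)) (nhdsWithin 0 (Ioi 0)) (nhdsWithin 0 (Ioi 0)) := by
    apply tendsto_nhdsWithin_of_tendsto_nhds_of_eventually_within
    · exact rpow_tendsto_zero (by norm_num)
    · filter_upwards [self_mem_nhdsWithin] with ε (hε : ε ∈ Ioi 0)
      exact Real.rpow_pos_of_pos hε _
  have h2 := tendsto_inv_nhdsGT_zero.comp h1
  apply h2.congr'
  filter_upwards [self_mem_nhdsWithin] with ε (hε : ε ∈ Ioi 0)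
  simp only [Function.comp_apply]
  rw [Real.rpow_neg (le_of_lt hε)]

lemma gammaFun_tendsto {C : ℝ} (hC : 1 < C) :
    Tendsto (gammaFun C) (nhdsWithin 0 (Ioi 0)) (nhds 0) := by
  have hC0 : (0:ℝ) < C := by linarith
  have t1 : Tendsto (fun ε : ℝ => (C+1) * ε^((1:ℝ)/3) * Mfun ε)
      (nhdsWithin 0 (Ioi 0)) (nhds 0) := by
    have heq : ∀ᶠ ε in nhdsWithin (0:ℝ) (Ioi 0),
        (C+1) * ε^((1:ℝ)/6) = (C+1) * ε^((1:ℝ)/3) * Mfun ε := by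
      filter_upwards [self_mem_nhdsWithin, Icc_mem_nhdsGT (by norm_num : (0:ℝ) < 1)]
        with ε (hε : ε ∈ Ioi 0) hε1
      have hε0 : (0:ℝ) < ε := hε
      have hM : Mfun ε = ε^(-(1/6):ℝ) := by
        apply max_eq_right
        exact Real.one_le_rpow_of_pos_of_le_one_of_nonpos hε0 hε1.2 (by norm_num)
      rw [hM, mul_assoc, ← Real.rpow_add hε0]
      norm_num
    refine Tendsto.congr' heq ?_
    have := (rpow_tendsto_zero (q := 1/6) (by norm_num)).const_mul (C+1)
    simpa using this
  have t2 : Tendsto (fun ε : ℝ => 6*C^3 * rexp (-(Mfun ε)^2/(8*C^2)))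
      (nhdsWithin 0 (Ioi 0)) (nhds 0) := by
    have hsq : Tendsto (fun ε : ℝ => (Mfun ε)^2) (nhdsWithin 0 (Ioi 0)) atTop :=
      (tendsto_pow_atTop (by norm_num)).comp Mfun_tendsto
    have hdiv : Tendsto (fun ε : ℝ => -(Mfun ε)^2/(8*C^2)) (nhdsWithin 0 (Ioi 0)) atBot := by
      have h := (hsq.atTop_div_const (by positivity : (0:ℝ) < 8*C^2))
      have := tendsto_neg_atTop_atBot.comp h
      refine this.congr (fun ε => ?_)
      simp [Function.comp, neg_div]
    have := (Real.tendsto_exp_atBot.comp hdiv).const_mul (6*C^3)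
    simpa using this
  have t3 : Tendsto (fun ε : ℝ => 4*ε) (nhdsWithin 0 (Ioi 0)) (nhds 0) := by
    have : Tendsto (fun ε : ℝ => 4*ε) (nhds 0) (nhds (4*0)) :=
      (continuous_const.mul continuous_id).tendsto 0
    rw [mul_zero] at this
    exact this.mono_left nhdsWithin_le_nhds
  have := (t1.add t2).add t3
  unfold gammaFun
  simpa using this

set_option maxHeartbeats 1200000 in
/-- Part (i) of the paper's Lemma 8.2 (`gapprox`): for every `C > 1` there is a
function `γ` vanishing at `0⁺` such that for all `ε > 0`, all `σ ∈ [1/C, C]`, and all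
random variables `ξ, η` on a common probability space with `η ~ N(0, σ²)` and
`E[(ξ − η)²] ≤ ε`, one has `(|p| ∨ 1) * |P(ξ > p) − P(η > p)| ≤ γ ε` for all `p`. -/
theorem stmt0 (C : ℝ) (hC : 1 < C) :
    ∃ γ : ℝ → ℝ,
      (∀ ε > (0 : ℝ), 0 ≤ γ ε) ∧
      Tendsto γ (nhdsWithin 0 (Ioi 0)) (nhds 0) ∧
      ∀ (ε : ℝ), 0 < ε →
      ∀ (σ : ℝ), σ ∈ Icc (1 / C) C →
      ∀ (Ω : Type) [MeasurableSpace Ω] (P : Measure Ω), IsProbabilityMeasure P →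
      ∀ (ξ η : Ω → ℝ), Measurable ξ → Measurable η →
        Measure.map η P = gaussianReal 0 ((σ ^ 2).toNNReal) →
        (∫⁻ ω, ENNReal.ofReal ((ξ ω - η ω) ^ 2) ∂P) ≤ ENNReal.ofReal ε →
        ∀ p : ℝ,
          max |p| 1 * |(P {ω | ξ ω > p}).toReal - (P {ω | η ω > p}).toReal| ≤ γ ε := by
  have hC0 : (0:ℝ) < C := by linarith
  refine ⟨gammaFun C, fun ε hε => gammaFun_nonneg hC hε, gammaFun_tendsto hC, ?_⟩
  intro ε hε σ hσ Ω _ P hP ξ η hξ hη hmap hmom p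
  obtain ⟨hσ1, hσ2⟩ := hσ
  have hσ0 : 0 < σ := lt_of_lt_of_le (by positivity) hσ1
  set v : ℝ≥0 := (σ ^ 2).toNNReal with hv_def
  have hvR : (v:ℝ) = σ^2 := Real.coe_toNNReal _ (sq_nonneg σ)
  have hv : v ≠ 0 := by
    intro h
    rw [h] at hvR
    simp at hvR
    nlinarith
  have hv1 : 1/C^2 ≤ (v:ℝ) := by
    rw [hvR]
    calc 1/C^2 = (1/C)^2 := by rw [div_pow, one_pow]
    _ ≤ σ^2 := by nlinarith [div_pos one_pos hC0]
  have hv2 : (v:ℝ) ≤ C^2 := by rw [hvR]; nlinarith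
  set ν : Measure ℝ := gaussianReal 0 v with hν_def
  set g : ℝ → ℝ := fun t => (ν (Ioi t)).toReal with hg_def
  set a : ℝ := (P {ω | ξ ω > p}).toReal with ha_def
  -- map identity
  have hgν : ∀ t : ℝ, P {ω | η ω > t} = ν (Ioi t) := by
    intro t
    rw [← hmap, Measure.map_apply hη measurableSet_Ioi]
    rfl
  -- basic bounds
  have ha0 : 0 ≤ a := ENNReal.toReal_nonneg
  have ha1 : a ≤ 1 := by
    rw [ha_def]
    exact ENNReal.toReal_le_of_le_ofReal one_pos.le (by simpa using prob_le_one)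
  have hg0 : ∀ t, 0 ≤ g t := fun t => ENNReal.toReal_nonneg
  have hg1 : ∀ t, g t ≤ 1 :=
    fun t => ENNReal.toReal_le_of_le_ofReal one_pos.le (by simpa using prob_le_one)
  -- complement
  have hcompl : ∀ t, g t + (ν (Iic t)).toReal = 1 := by
    intro t
    have h := measure_add_measure_compl (μ := ν) (measurableSet_Ioi (a := t))
    rw [compl_Ioi, measure_univ] at h
    rw [hg_def, ← ENNReal.toReal_add (measure_ne_top ν _) (measure_ne_top ν _), h]
    simp
  -- comparison inequalities
  have hcompare1 : ∀ δ : ℝ, 0 < δ → a ≤ g (p - δ) + ε/δ^2 := by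
    intro δ hδ
    have hsub : {ω | ξ ω > p} ⊆ {ω | η ω > p - δ} ∪ {ω | δ < |ξ ω - η ω|} := by
      intro ω hω
      by_cases hbad : δ < |ξ ω - η ω|
      · exact Or.inr hbad
      · left
        have h1 := (abs_le.1 (not_lt.1 hbad)).2
        have : ξ ω > p := hω
        show p - δ < η ω
        linarith
    have hE : P {ω | ξ ω > p} ≤ ν (Ioi (p - δ)) + ENNReal.ofReal (ε/δ^2) := by
      refine le_trans (le_trans (measure_mono hsub) (measure_union_le _ _)) ?_
      exact add_le_add (le_of_eq (hgν _)) (aux_cheb hξ hη hmom hδ)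
    calc a ≤ (ν (Ioi (p - δ)) + ENNReal.ofReal (ε/δ^2)).toReal :=
          ENNReal.toReal_mono (by finiteness) hE
    _ = g (p - δ) + ε/δ^2 := by
        rw [ENNReal.toReal_add (measure_ne_top ν _) ENNReal.ofReal_ne_top,
          ENNReal.toReal_ofReal (by positivity)]
  have hcompare2 : ∀ δ : ℝ, 0 < δ → g (p + δ) ≤ a + ε/δ^2 := by
    intro δ hδ
    have hsub : {ω | η ω > p + δ} ⊆ {ω | ξ ω > p} ∪ {ω | δ < |ξ ω - η ω|} := by
      intro ω hω
      by_cases hbad : δ < |ξ ω - η ω|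
      · exact Or.inr hbad
      · left
        have h1 := (abs_le.1 (not_lt.1 hbad)).1
        have : η ω > p + δ := hω
        show p < ξ ω
        linarith
    have hE : ν (Ioi (p + δ)) ≤ P {ω | ξ ω > p} + ENNReal.ofReal (ε/δ^2) := by
      rw [← hgν]
      refine le_trans (le_trans (measure_mono hsub) (measure_union_le _ _)) ?_
      exact add_le_add le_rfl (aux_cheb hξ hη hmom hδ)
    calc g (p + δ) ≤ (P {ω | ξ ω > p} + ENNReal.ofReal (ε/δ^2)).toReal :=
          ENNReal.toReal_mono (by finiteness) hE
    _ = a + ε/δ^2 := by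
        rw [ENNReal.toReal_add (measure_ne_top P _) ENNReal.ofReal_ne_top,
          ENNReal.toReal_ofReal (by positivity)]
  -- density bound
  have hdens : ∀ s t : ℝ, s ≤ t → g s ≤ g t + C * (t - s) := by
    intro s t hst
    have hsub : Ioi s ⊆ Ioc s t ∪ Ioi t := by
      intro x hx
      rcases le_or_gt x t with h | h
      · exact Or.inl ⟨hx, h⟩
      · exact Or.inr h
    calc g s ≤ (ν (Ioc s t) + ν (Ioi t)).toReal :=
          ENNReal.toReal_mono (by finiteness)
            (le_trans (measure_mono hsub) (measure_union_le _ _))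
    _ = (ν (Ioc s t)).toReal + g t := by
        rw [ENNReal.toReal_add (measure_ne_top ν _) (measure_ne_top ν _)]
    _ ≤ g t + C * (t - s) := by
        have := aux_Ioc hC hv hv1 hst
        have h2 : (ν (Ioc s t)).toReal ≤ C * (t - s) :=
          ENNReal.toReal_le_of_le_ofReal (by nlinarith) this
        linarith
  -- tails
  have htail : ∀ t : ℝ, 0 < t → g t ≤ 2*C^3/t * rexp (-t^2 / (2*C^2)) := by
    intro t ht
    exact ENNReal.toReal_le_of_le_ofReal (by positivity) (aux_tail_Ioi hC hv hv1 hv2 ht)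
  have htail' : ∀ t : ℝ, t < 0 → 1 - g t ≤ 2*C^3/(-t) * rexp (-t^2 / (2*C^2)) := by
    intro t ht
    have h1 : 1 - g t = (ν (Iic t)).toReal := by
      have := hcompl t
      linarith
    rw [h1, hν_def, aux_iic_eq hv t]
    have h4 := aux_tail_Ioi hC hv hv1 hv2 (t := -t) (by linarith)
    have h2 : (-t)^2 = t^2 := by ring
    rw [h2] at h4
    exact ENNReal.toReal_le_of_le_ofReal
      (mul_nonneg (div_nonneg (by positivity) (by linarith)) (Real.exp_nonneg _)) h4
  -- epsilon powers
  set δ : ℝ := ε ^ ((1:ℝ)/3) with hδ_def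
  have hδ0 : 0 < δ := Real.rpow_pos_of_pos hε _
  have hδsq : δ^2 = ε^((2:ℝ)/3) := by
    rw [hδ_def, ← Real.rpow_natCast (ε^((1:ℝ)/3)) 2, ← Real.rpow_mul hε.le]
    norm_num
  have hεδ : ε/δ^2 = δ := by
    rw [hδsq, hδ_def]
    nth_rewrite 1 [← Real.rpow_one ε]
    rw [← Real.rpow_sub hε]
    norm_num
  set M : ℝ := Mfun ε with hM_def
  have hM1 : 1 ≤ M := le_max_left _ _
  set E0 : ℝ := rexp (-M^2/(8*C^2)) with hE0_def
  have hE0 : 0 ≤ E0 := Real.exp_nonneg _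
  have hγ : gammaFun C ε = (C+1) * δ * M + 6*C^3 * E0 + 4*ε := by
    rw [gammaFun, ← hM_def, ← hδ_def, ← hE0_def]
  have hE6 : 0 ≤ 6*C^3 * E0 := mul_nonneg (by positivity) hE0
  have hterm1 : 0 ≤ (C+1) * δ * M := by
    have h1 : (0:ℝ) ≤ (C+1) * δ := by positivity
    nlinarith
  clear_value δ M E0
  have hgp : (P {ω | η ω > p}).toReal = g p := congrArg ENNReal.toReal (hgν p)
  rw [hgp]
  rcases le_or_gt (max |p| 1) M with hcase | hcase
  · -- small p
    have habs : |a - g p| ≤ (C+1) * δ := by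
      have h1 := hcompare1 δ hδ0
      have h2 := hcompare2 δ hδ0
      have h3 := hdens (p - δ) p (by linarith)
      have h4 := hdens p (p + δ) (by linarith)
      rw [show p - (p - δ) = δ by ring] at h3
      rw [show p + δ - p = δ by ring] at h4
      rw [hεδ] at h1 h2
      rw [abs_le]
      constructor
      · linarith
      · linarith
    calc max |p| 1 * |a - g p| ≤ M * ((C+1) * δ) :=
          mul_le_mul hcase habs (abs_nonneg _) (by linarith)
    _ ≤ gammaFun C ε := by rw [hγ]; nlinarith
  · -- large p
    have hmax : max |p| 1 = |p| := by
      rcases max_cases |p| 1 with ⟨h, _⟩ | ⟨h, hle⟩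
      · exact h
      · rw [h] at hcase; linarith
    have hMp : M < |p| := by rw [← hmax]; exact hcase
    have h1p : 1 < |p| := lt_of_le_of_lt hM1 hMp
    have hp0 : p ≠ 0 := by intro h0; rw [h0, abs_zero] at h1p; linarith
    rcases hp0.lt_or_gt with hp | hp
    · -- p < 0
      have hpabs : |p| = -p := abs_of_neg hp
      have hq1 : 1 < -p := by rwa [hpabs] at h1p
      have hqM : M < -p := by rwa [hpabs] at hMp
      have hM0 : 0 < M := lt_of_lt_of_le one_pos hM1
      have hsq : M^2 ≤ p^2 := by nlinarith
      have hE1 : rexp (-p^2/(2*C^2)) ≤ E0 := by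
        rw [hE0_def]
        apply Real.exp_le_exp.2
        rw [neg_div, neg_div, neg_le_neg_iff, div_le_div_iff₀ (by positivity) (by positivity)]
        have h5 := mul_le_mul_of_nonneg_right hsq (show (0:ℝ) ≤ 2*C^2 by positivity)
        have h6 : 0 ≤ p^2 * C^2 := by positivity
        nlinarith
      have hE2 : rexp (-(p/2)^2/(2*C^2)) ≤ E0 := by
        rw [hE0_def]
        apply Real.exp_le_exp.2
        rw [neg_div, neg_div, neg_le_neg_iff, div_le_div_iff₀ (by positivity) (by positivity)]
        have h5 := mul_le_mul_of_nonneg_right hsq (show (0:ℝ) ≤ 2*C^2 by positivity)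
        have h6 : 0 ≤ p^2 * C^2 := by positivity
        nlinarith
      have hA : (-p) * (1 - g p) ≤ 2*C^3 * E0 := by
        have h := htail' p hp
        have h2 : (-p) * (1 - g p) ≤ (-p) * (2*C^3/(-p) * rexp (-p^2/(2*C^2))) :=
          mul_le_mul_of_nonneg_left h (by linarith)
        have h3 : (-p) * (2*C^3/(-p) * rexp (-p^2/(2*C^2))) = 2*C^3 * rexp (-p^2/(2*C^2)) := by
          field_simp
        rw [h3] at h2
        have h4 : 2*C^3 * rexp (-p^2/(2*C^2)) ≤ 2*C^3 * E0 :=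
          mul_le_mul_of_nonneg_left hE1 (by positivity)
        linarith
      have hc2 := hcompare2 (-p/2) (by linarith)
      rw [show p + -p/2 = p/2 by ring] at hc2
      have hB : (-p) * (1 - g (p/2)) ≤ 4*C^3 * E0 := by
        have h := htail' (p/2) (by linarith)
        have h2 : (-p) * (1 - g (p/2)) ≤ (-p) * (2*C^3/(-(p/2)) * rexp (-(p/2)^2/(2*C^2))) :=
          mul_le_mul_of_nonneg_left h (by linarith)
        have h3 : (-p) * (2*C^3/(-(p/2)) * rexp (-(p/2)^2/(2*C^2)))
            = 4*C^3 * rexp (-(p/2)^2/(2*C^2)) := by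
          field_simp
          ring
        rw [h3] at h2
        have h4 : 4*C^3 * rexp (-(p/2)^2/(2*C^2)) ≤ 4*C^3 * E0 :=
          mul_le_mul_of_nonneg_left hE2 (by positivity)
        linarith
      have hεp : (-p) * (ε/(-p/2)^2) ≤ 4*ε := by
        have h3 : (-p) * (ε/(-p/2)^2) = 4*ε/(-p) := by
          field_simp
          ring
        rw [h3, div_le_iff₀ (by linarith)]
        have := mul_le_mul_of_nonneg_left hq1.le (show (0:ℝ) ≤ 4*ε by positivity)
        linarith
      have habs : |a - g p| ≤ (1 - a) + (1 - g p) := by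
        rw [abs_le]
        exact ⟨by linarith [hg1 p], by linarith [hg1 p]⟩
      have hfin : (-p) * |a - g p| ≤ 6*C^3 * E0 + 4*ε := by
        have h1 : (-p) * |a - g p| ≤ (-p) * ((1 - a) + (1 - g p)) :=
          mul_le_mul_of_nonneg_left habs (by linarith)
        have h2 : (-p) * (1 - a) ≤ (-p) * ((1 - g (p/2)) + ε/(-p/2)^2) :=
          mul_le_mul_of_nonneg_left (by linarith) (by linarith)
        have h2' : (-p) * ((1 - g (p/2)) + ε/(-p/2)^2)
            = (-p) * (1 - g (p/2)) + (-p) * (ε/(-p/2)^2) := by ring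
        have h1' : (-p) * ((1 - a) + (1 - g p)) = (-p) * (1 - a) + (-p) * (1 - g p) := by ring
        rw [h1'] at h1
        rw [h2'] at h2
        linarith
      rw [hmax, hpabs, hγ]
      linarith
    · -- p > 0
      have hpabs : |p| = p := abs_of_pos hp
      have hq1 : 1 < p := by rwa [hpabs] at h1p
      have hqM : M < p := by rwa [hpabs] at hMp
      have hM0 : 0 < M := lt_of_lt_of_le one_pos hM1
      have hsq : M^2 ≤ p^2 := by nlinarith
      have hE1 : rexp (-p^2/(2*C^2)) ≤ E0 := by
        rw [hE0_def]
        apply Real.exp_le_exp.2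
        rw [neg_div, neg_div, neg_le_neg_iff, div_le_div_iff₀ (by positivity) (by positivity)]
        have h5 := mul_le_mul_of_nonneg_right hsq (show (0:ℝ) ≤ 2*C^2 by positivity)
        have h6 : 0 ≤ p^2 * C^2 := by positivity
        nlinarith
      have hE2 : rexp (-(p/2)^2/(2*C^2)) ≤ E0 := by
        rw [hE0_def]
        apply Real.exp_le_exp.2
        rw [neg_div, neg_div, neg_le_neg_iff, div_le_div_iff₀ (by positivity) (by positivity)]
        have h5 := mul_le_mul_of_nonneg_right hsq (show (0:ℝ) ≤ 2*C^2 by positivity)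
        have h6 : 0 ≤ p^2 * C^2 := by positivity
        nlinarith
      have hA : p * g p ≤ 2*C^3 * E0 := by
        have h := htail p hp
        have h2 : p * g p ≤ p * (2*C^3/p * rexp (-p^2/(2*C^2))) :=
          mul_le_mul_of_nonneg_left h hp.le
        have h3 : p * (2*C^3/p * rexp (-p^2/(2*C^2))) = 2*C^3 * rexp (-p^2/(2*C^2)) := by
          field_simp
        rw [h3] at h2
        have h4 : 2*C^3 * rexp (-p^2/(2*C^2)) ≤ 2*C^3 * E0 :=
          mul_le_mul_of_nonneg_left hE1 (by positivity)
        linarith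
      have hB : p * g (p/2) ≤ 4*C^3 * E0 := by
        have h := htail (p/2) (by linarith)
        have h2 : p * g (p/2) ≤ p * (2*C^3/(p/2) * rexp (-(p/2)^2/(2*C^2))) :=
          mul_le_mul_of_nonneg_left h hp.le
        have h3 : p * (2*C^3/(p/2) * rexp (-(p/2)^2/(2*C^2)))
            = 4*C^3 * rexp (-(p/2)^2/(2*C^2)) := by
          field_simp
          ring
        rw [h3] at h2
        have h4 : 4*C^3 * rexp (-(p/2)^2/(2*C^2)) ≤ 4*C^3 * E0 :=
          mul_le_mul_of_nonneg_left hE2 (by positivity)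
        linarith
      have hc1 := hcompare1 (p/2) (by linarith)
      rw [show p - p/2 = p/2 by ring] at hc1
      have hεp : p * (ε/(p/2)^2) ≤ 4*ε := by
        have h3 : p * (ε/(p/2)^2) = 4*ε/p := by
          field_simp
          ring
        rw [h3, div_le_iff₀ (by linarith)]
        have := mul_le_mul_of_nonneg_left hq1.le (show (0:ℝ) ≤ 4*ε by positivity)
        linarith
      have habs : |a - g p| ≤ a + g p := by
        rw [abs_le]
        exact ⟨by linarith [hg0 p], by linarith [hg0 p]⟩
      have hfin : p * |a - g p| ≤ 6*C^3 * E0 + 4*ε := by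
        have h1 : p * |a - g p| ≤ p * (a + g p) :=
          mul_le_mul_of_nonneg_left habs hp.le
        have h2 : p * a ≤ p * (g (p/2) + ε/(p/2)^2) :=
          mul_le_mul_of_nonneg_left hc1 hp.le
        have h2' : p * (g (p/2) + ε/(p/2)^2) = p * g (p/2) + p * (ε/(p/2)^2) := by ring
        have h1' : p * (a + g p) = p * a + p * g p := by ring
        rw [h1'] at h1
        rw [h2'] at h2
        linarith
      rw [hmax, hpabs, hγ]
      linarith
end

section
/- Let ξ and η be real random variables on a common probability space, suppose the law of η is absolutely continuous with respect to Lebesgue measure with density bounded above by a constant M > 0, and suppose E[(ξ − η)²] ≤ ε for some ε > 0. Then for every p ∈ ℝ: P(ξ > p, η ≤ p) ≤ (M + 1) · ε^{1/3}, and likewise P(ξ ≤ p, η > p) ≤ (M + 1) · ε^{1/3}. -/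
open MeasureTheory ProbabilityTheory Filter Set

lemma density_Ioc_bound {Ω : Type} [MeasurableSpace Ω] (P : Measure Ω)
    (η : Ω → ℝ) (hη : Measurable η) (M : ℝ) (f : ℝ → ENNReal)
    (hf : Measure.map η P = MeasureTheory.volume.withDensity f)
    (hfM : ∀ᵐ x ∂(MeasureTheory.volume : Measure ℝ), f x ≤ ENNReal.ofReal M)
    (a b : ℝ) :
    P (η ⁻¹' Set.Ioc a b) ≤ ENNReal.ofReal M * ENNReal.ofReal (b - a) := by
  have h1 : P (η ⁻¹' Set.Ioc a b) = Measure.map η P (Set.Ioc a b) :=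
    (Measure.map_apply hη measurableSet_Ioc).symm
  rw [h1, hf, withDensity_apply _ measurableSet_Ioc]
  calc ∫⁻ x in Set.Ioc a b, f x ∂volume
      ≤ ∫⁻ _x in Set.Ioc a b, ENNReal.ofReal M ∂volume := by
        refine lintegral_mono_ae ?_
        exact (ae_restrict_of_ae hfM)
    _ = ENNReal.ofReal M * volume (Set.Ioc a b) := by
        rw [lintegral_const, Measure.restrict_apply MeasurableSet.univ, Set.univ_inter]
    _ = ENNReal.ofReal M * ENNReal.ofReal (b - a) := by rw [Real.volume_Ioc]

lemma cheb_bound {Ω : Type} [MeasurableSpace Ω] (P : Measure Ω)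
    (ξ η : Ω → ℝ) (hξ : Measurable ξ) (hη : Measurable η)
    (ε : ℝ) (hε : 0 < ε)
    (hL2 : (∫⁻ ω, ENNReal.ofReal ((ξ ω - η ω) ^ 2) ∂P) ≤ ENNReal.ofReal ε) :
    P {ω | ε ^ ((1:ℝ)/3) ≤ |ξ ω - η ω|} ≤ ENNReal.ofReal (ε ^ ((1:ℝ)/3)) := by
  set δ : ℝ := ε ^ ((1:ℝ)/3) with hδdef
  have hδpos : 0 < δ := Real.rpow_pos_of_pos hε _
  have hmeas : AEMeasurable (fun ω => ENNReal.ofReal ((ξ ω - η ω) ^ 2)) P := by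
    exact (ENNReal.measurable_ofReal.comp (((hξ.sub hη).pow_const 2))).aemeasurable
  have hsub : {ω | δ ≤ |ξ ω - η ω|} ⊆
      {ω | ENNReal.ofReal (δ ^ 2) ≤ ENNReal.ofReal ((ξ ω - η ω) ^ 2)} := by
    intro ω hω
    simp only [Set.mem_setOf_eq] at hω ⊢
    apply ENNReal.ofReal_le_ofReal
    calc δ ^ 2 ≤ |ξ ω - η ω| ^ 2 := by
          exact pow_le_pow_left₀ hδpos.le hω 2
      _ = (ξ ω - η ω) ^ 2 := sq_abs _
  have hne : ENNReal.ofReal (δ ^ 2) ≠ 0 := by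
    simp [ENNReal.ofReal_eq_zero, not_le, pow_pos hδpos, hδpos.ne']
  have hch := meas_ge_le_lintegral_div hmeas hne (by simp)
  calc P {ω | δ ≤ |ξ ω - η ω|} ≤ P {ω | ENNReal.ofReal (δ ^ 2) ≤ ENNReal.ofReal ((ξ ω - η ω) ^ 2)} :=
        measure_mono hsub
    _ ≤ (∫⁻ ω, ENNReal.ofReal ((ξ ω - η ω) ^ 2) ∂P) / ENNReal.ofReal (δ ^ 2) := hch
    _ ≤ ENNReal.ofReal ε / ENNReal.ofReal (δ ^ 2) := by
        exact ENNReal.div_le_div_right hL2 _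
    _ = ENNReal.ofReal (ε / δ ^ 2) := by
        rw [ENNReal.ofReal_div_of_pos (pow_pos hδpos 2)]
    _ = ENNReal.ofReal δ := by
        congr 1
        have h2 : δ ^ 2 = ε ^ ((2:ℝ)/3) := by
          rw [hδdef, ← Real.rpow_natCast (ε ^ ((1:ℝ)/3)) 2, ← Real.rpow_mul hε.le]
          norm_num
        rw [h2, hδdef]
        have h3 := Real.rpow_sub hε 1 ((2:ℝ)/3)
        rw [Real.rpow_one] at h3
        norm_num at h3
        rw [← h3]

/-- Key intermediate estimate in the proof of the paper's Lemma 8.2: if the law of `η`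
has a Lebesgue density bounded by `M`, and `E[(ξ − η)²] ≤ ε`, then
`P(ξ > p, η ≤ p) ≤ (M+1)·ε^{1/3}` and `P(ξ ≤ p, η > p) ≤ (M+1)·ε^{1/3}`. -/
theorem stmt2 (Ω : Type) [MeasurableSpace Ω] (P : Measure Ω) [IsProbabilityMeasure P]
    (ξ η : Ω → ℝ) (hξ : Measurable ξ) (hη : Measurable η)
    (M : ℝ) (hM : 0 < M)
    (f : ℝ → ENNReal)
    (hf : Measure.map η P = MeasureTheory.volume.withDensity f)
    (hfM : ∀ᵐ x ∂(MeasureTheory.volume : Measure ℝ), f x ≤ ENNReal.ofReal M)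
    (ε : ℝ) (hε : 0 < ε)
    (hL2 : (∫⁻ ω, ENNReal.ofReal ((ξ ω - η ω) ^ 2) ∂P) ≤ ENNReal.ofReal ε) :
    ∀ p : ℝ,
      (P {ω | ξ ω > p ∧ η ω ≤ p}).toReal ≤ (M + 1) * ε ^ ((1 : ℝ) / 3) ∧
      (P {ω | ξ ω ≤ p ∧ η ω > p}).toReal ≤ (M + 1) * ε ^ ((1 : ℝ) / 3) := by
  intro p
  set δ : ℝ := ε ^ ((1:ℝ)/3) with hδdef
  have hδpos : 0 < δ := Real.rpow_pos_of_pos hε _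
  have hcheb := cheb_bound P ξ η hξ hη ε hε hL2
  have hrhs : ENNReal.ofReal δ + ENNReal.ofReal M * ENNReal.ofReal δ
      = ENNReal.ofReal ((M + 1) * δ) := by
    rw [← ENNReal.ofReal_mul hM.le, ← ENNReal.ofReal_add hδpos.le (by positivity)]
    ring_nf
  have key : ∀ (S : Set Ω) (a b : ℝ), b - a = δ →
      S ⊆ {ω | δ ≤ |ξ ω - η ω|} ∪ η ⁻¹' Set.Ioc a b →
      (P S).toReal ≤ (M + 1) * δ := by
    intro S a b hab hS
    have h1 : P S ≤ ENNReal.ofReal ((M + 1) * δ) := by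
      calc P S ≤ P ({ω | δ ≤ |ξ ω - η ω|} ∪ η ⁻¹' Set.Ioc a b) := measure_mono hS
        _ ≤ P {ω | δ ≤ |ξ ω - η ω|} + P (η ⁻¹' Set.Ioc a b) := measure_union_le _ _
        _ ≤ ENNReal.ofReal δ + ENNReal.ofReal M * ENNReal.ofReal δ := by
            refine add_le_add hcheb ?_
            have := density_Ioc_bound P η hη M f hf hfM a b
            rwa [hab] at this
        _ = ENNReal.ofReal ((M + 1) * δ) := hrhs
    exact ENNReal.toReal_le_of_le_ofReal (by positivity) h1
  constructor
  · refine key _ (p - δ) p (by ring) ?_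
    intro ω hω
    obtain ⟨h1, h2⟩ := hω
    by_cases hc : p - δ < η ω
    · exact Or.inr ⟨hc, h2⟩
    · left
      push_neg at hc
      have : δ ≤ ξ ω - η ω := by linarith
      simp only [Set.mem_setOf_eq]
      calc δ ≤ ξ ω - η ω := this
        _ ≤ |ξ ω - η ω| := le_abs_self _
  · refine key _ p (p + δ) (by ring) ?_
    intro ω hω
    obtain ⟨h1, h2⟩ := hω
    by_cases hc : η ω ≤ p + δ
    · exact Or.inr ⟨h2, hc⟩
    · left
      push_neg at hc
      have : δ ≤ η ω - ξ ω := by linarith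
      simp only [Set.mem_setOf_eq]
      calc δ ≤ η ω - ξ ω := this
        _ = -(ξ ω - η ω) := by ring
        _ ≤ |ξ ω - η ω| := neg_le_abs _
end

section
/- Let X be an integrable real random variable such that P(X < p) > 0 for every p ≤ 0, and let C₁ > 0 be a constant such that P(X < −(x + z)) ≤ C₁ · e^{−z} · P(X < −x) for all x, z ≥ 0. Then for every p ≤ 0: 0 ≤ p − E[X · 1_{X < p}] / P(X < p) ≤ C₁. (Equivalently, the conditional mean of X given {X < p} lies within C₁ of p.) -/
open MeasureTheory ProbabilityTheory Filter Set

/-- Measure-theoretic core of the paper's Lemma 7.2: if `X` is integrable, `P(X < p) > 0`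
for all `p ≤ 0`, and the lower tails satisfy the exponential bound
`P(X < −(x+z)) ≤ C₁ e^{−z} P(X < −x)` for all `x, z ≥ 0`, then for every `p ≤ 0` the
conditional mean of `X` given `{X < p}` lies within `C₁` of `p` (from below). -/
theorem stmt3 (Ω : Type) [MeasurableSpace Ω] (P : Measure Ω) [IsProbabilityMeasure P]
    (X : Ω → ℝ) (hX : Measurable X) (hInt : Integrable X P)
    (hpos : ∀ p ≤ (0 : ℝ), 0 < (P {ω | X ω < p}).toReal)
    (C₁ : ℝ) (hC₁ : 0 < C₁)
    (htail : ∀ x ≥ (0 : ℝ), ∀ z ≥ (0 : ℝ),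
      (P {ω | X ω < -(x + z)}).toReal ≤ C₁ * Real.exp (-z) * (P {ω | X ω < -x}).toReal) :
    ∀ p ≤ (0 : ℝ),
      0 ≤ p - (∫ ω in {ω | X ω < p}, X ω ∂P) / (P {ω | X ω < p}).toReal ∧
      p - (∫ ω in {ω | X ω < p}, X ω ∂P) / (P {ω | X ω < p}).toReal ≤ C₁ := by
  intro p hp
  set A : Set Ω := {ω | X ω < p} with hA
  have hAmeas : MeasurableSet A := measurableSet_lt hX measurable_const
  set μp : ℝ := (P A).toReal with hμp
  have hμpos : 0 < μp := hpos p hp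
  set g : Ω → ℝ := fun ω => max (p - X ω) 0 with hg
  have hg_eq : g = A.indicator (fun ω => p - X ω) := by
    funext ω
    by_cases h : ω ∈ A
    · simp only [indicator_of_mem h]
      exact max_eq_left (by simp only [hA, mem_setOf_eq] at h; linarith)
    · simp only [indicator_of_notMem h]
      exact max_eq_right (by simp only [hA, mem_setOf_eq, not_lt] at h; linarith)
  have hg_int : Integrable g P := by
    have : Integrable (fun ω => p - X ω) P := (integrable_const p).sub hInt
    exact this.pos_part
  have hg_nn : 0 ≤ᵐ[P] g := Eventually.of_forall fun ω => le_max_right _ _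
  -- layer cake
  have hlc : ∫ ω, g ω ∂P = ∫ t in Ioi 0, ((P {ω | t < g ω}).toReal) :=
    hg_int.integral_eq_integral_meas_lt hg_nn
  -- identify the tail sets
  have hset : ∀ t ∈ Ioi (0:ℝ), {ω | t < g ω} = {ω | X ω < p - t} := by
    intro t ht
    ext ω
    simp only [mem_setOf_eq, hg, lt_max_iff]
    have hnt : ¬ t < 0 := not_lt.mpr ht.le
    constructor
    · rintro (h | h)
      · linarith
      · exact absurd h hnt
    · intro h; left; linarith
  have hlc2 : ∫ ω, g ω ∂P = ∫ t in Ioi 0, ((P {ω | X ω < p - t}).toReal) := by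
    rw [hlc]
    refine setIntegral_congr_fun measurableSet_Ioi fun t ht => ?_
    rw [hset t ht]
  -- the tail bound
  have hbound : ∀ t ∈ Ioi (0:ℝ),
      (P {ω | X ω < p - t}).toReal ≤ C₁ * μp * Real.exp (-t) := by
    intro t ht
    have := htail (-p) (by linarith) t ht.le
    have he : -(-p + t) = p - t := by ring
    rw [he, neg_neg] at this
    calc (P {ω | X ω < p - t}).toReal ≤ C₁ * Real.exp (-t) * μp := this
      _ = C₁ * μp * Real.exp (-t) := by ring
  -- measurability of the tail function
  have hanti : Antitone (fun t : ℝ => (P {ω | X ω < p - t}).toReal) := by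
    intro s t hst
    apply ENNReal.toReal_mono (measure_ne_top _ _)
    apply measure_mono
    intro ω hω
    simp only [mem_setOf_eq] at hω ⊢
    linarith
  have hmble : Measurable (fun t : ℝ => (P {ω | X ω < p - t}).toReal) :=
    hanti.measurable
  have hexp_int : IntegrableOn (fun t : ℝ => C₁ * μp * Real.exp (-t)) (Ioi 0) := by
    have h1 : IntegrableOn (fun t : ℝ => Real.exp (-t)) (Ioi 0) := by
      simpa using exp_neg_integrableOn_Ioi 0 one_pos
    exact h1.const_mul _
  have htail_int : IntegrableOn (fun t : ℝ => (P {ω | X ω < p - t}).toReal) (Ioi 0) := by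
    refine Integrable.mono' hexp_int hmble.aestronglyMeasurable ?_
    refine (ae_restrict_iff' measurableSet_Ioi).mpr (Eventually.of_forall fun t ht => ?_)
    rw [Real.norm_eq_abs, abs_of_nonneg ENNReal.toReal_nonneg]
    exact hbound t ht
  have hint_le : ∫ ω, g ω ∂P ≤ C₁ * μp := by
    rw [hlc2]
    calc ∫ t in Ioi 0, ((P {ω | X ω < p - t}).toReal)
        ≤ ∫ t in Ioi 0, C₁ * μp * Real.exp (-t) := by
          refine setIntegral_mono_on htail_int hexp_int measurableSet_Ioi hbound
      _ = C₁ * μp * ∫ t in Ioi 0, Real.exp (-t) := by rw [integral_const_mul]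
      _ = C₁ * μp := by rw [integral_exp_neg_Ioi_zero, mul_one]
  -- compute ∫ g
  have hXA : IntegrableOn X A P := hInt.integrableOn
  have hg_val : ∫ ω, g ω ∂P = p * μp - ∫ ω in A, X ω ∂P := by
    rw [hg_eq, integral_indicator hAmeas, integral_sub ((integrableOn_const_iff (C := p)).mpr
      (Or.inr (measure_lt_top _ _))) hXA, setIntegral_const]
    simp [hμp, smul_eq_mul, mul_comm, Measure.real]
  have hg_nonneg : 0 ≤ ∫ ω, g ω ∂P := integral_nonneg fun ω => le_max_right _ _
  have hglb : 0 ≤ p * μp - ∫ ω in A, X ω ∂P := hg_val ▸ hg_nonneg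
  have hgub : p * μp - ∫ ω in A, X ω ∂P ≤ C₁ * μp := hg_val ▸ hint_le
  have hkey : p - (∫ ω in A, X ω ∂P) / μp = (p * μp - ∫ ω in A, X ω ∂P) / μp := by
    field_simp
  constructor
  · rw [hkey]; exact div_nonneg hglb hμpos.le
  · rw [hkey]
    rw [div_le_iff₀ hμpos]
    calc p * μp - ∫ ω in A, X ω ∂P ≤ C₁ * μp := hgub
      _ = C₁ * μp := rfl
end

section
/- For every σ > 0 and every x < 0, the function p ↦ A_σ(p; x) attains its maximum over ℝ at a unique point p_σ(x); moreover it is strictly increasing on (−∞, p_σ(x)] and strictly decreasing on [p_σ(x), ∞), and p_σ(x) is the unique real solution p of the equation (1 − Φ(p/σ)) / φ(p/σ) = −x/σ. -/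
open MeasureTheory ProbabilityTheory Filter Set
open scoped Real Topology NNReal ENNReal

/-- The standard normal density `φ`. -/
noncomputable def gaussPDF (t : ℝ) : ℝ := (Real.sqrt (2 * Real.pi))⁻¹ * Real.exp (-t ^ 2 / 2)

/-- The standard normal cumulative distribution function `Φ`. -/
noncomputable def gaussCDF (p : ℝ) : ℝ := ∫ t in Iic p, gaussPDF t

/-- `A_σ(p; x) = E[(p − x − σ·η)·1_{σ·η > p}]` with `η` standard normal. -/
noncomputable def Agauss (σ p x : ℝ) : ℝ :=
  ∫ t in {t : ℝ | σ * t > p}, (p - x - σ * t) ∂(gaussianReal 0 1)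


lemma gaussPDF_eq : gaussPDF = gaussianPDFReal 0 1 := by
  ext t
  simp [gaussPDF, gaussianPDFReal]

lemma gaussPDF_pos (t : ℝ) : 0 < gaussPDF t := by
  rw [gaussPDF_eq]; exact gaussianPDFReal_pos 0 1 t one_ne_zero

lemma integrable_gaussPDF : Integrable gaussPDF := by
  rw [gaussPDF_eq]; exact integrable_gaussianPDFReal 0 1

lemma integral_gaussPDF : ∫ t, gaussPDF t = 1 := by
  rw [gaussPDF_eq]; exact integral_gaussianPDFReal_eq_one 0 one_ne_zero

lemma continuous_gaussPDF : Continuous gaussPDF := by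
  unfold gaussPDF
  fun_prop

lemma hasDerivAt_gaussPDF (t : ℝ) : HasDerivAt gaussPDF (-t * gaussPDF t) t := by
  unfold gaussPDF
  have h : HasDerivAt (fun t : ℝ => -t ^ 2 / 2) (-t) t := by
    have := ((hasDerivAt_pow 2 t).neg).div_const 2
    refine this.congr_deriv ?_; norm_num; ring
  have := (h.exp).const_mul (Real.sqrt (2 * Real.pi))⁻¹
  refine this.congr_deriv ?_
  ring

lemma integrable_mul_gaussPDF : Integrable (fun t => t * gaussPDF t) := by
  have h := (integrable_mul_exp_neg_mul_sq (by norm_num : (0:ℝ) < 1/2)).const_mul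
    (Real.sqrt (2 * Real.pi))⁻¹
  convert h using 2 with t
  unfold gaussPDF
  rw [show -t ^ 2 / 2 = -(1/2) * t ^ 2 by ring]
  ring

lemma tendsto_gaussPDF_atTop : Tendsto gaussPDF atTop (𝓝 0) := by
  unfold gaussPDF
  rw [show (0:ℝ) = (Real.sqrt (2 * Real.pi))⁻¹ * 0 by ring]
  apply Tendsto.const_mul
  apply Real.tendsto_exp_atBot.comp
  have h : Tendsto (fun t : ℝ => t ^ 2 / 2) atTop atTop :=
    (tendsto_pow_atTop two_ne_zero).atTop_div_const two_pos
  simpa [div_eq_mul_inv, neg_mul] using tendsto_neg_atBot_iff.mpr h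

lemma integral_Ioi_mul_gaussPDF (a : ℝ) : ∫ t in Ioi a, t * gaussPDF t = gaussPDF a := by
  have h := integral_Ioi_of_hasDerivAt_of_tendsto' (f := fun t => -gaussPDF t)
    (f' := fun t => t * gaussPDF t) (a := a) (m := 0)
    (fun t _ => by have := (hasDerivAt_gaussPDF t).neg; simp only [neg_mul, neg_neg] at this; exact this)
    integrable_mul_gaussPDF.integrableOn
    (by simpa using tendsto_gaussPDF_atTop.neg)
  simpa using h

lemma integral_Ioi_gaussPDF (a : ℝ) : ∫ t in Ioi a, gaussPDF t = 1 - gaussCDF a := by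
  have h := intervalIntegral.integral_Iic_add_Ioi (b := a) integrable_gaussPDF.integrableOn
    integrable_gaussPDF.integrableOn
  rw [integral_gaussPDF] at h
  unfold gaussCDF
  linarith

lemma hasDerivAt_gaussCDF (p : ℝ) : HasDerivAt gaussCDF (gaussPDF p) p := by
  have heq : gaussCDF = fun q => gaussCDF 0 + ∫ t in (0:ℝ)..q, gaussPDF t := by
    funext q
    unfold gaussCDF
    rw [← intervalIntegral.integral_Iic_sub_Iic integrable_gaussPDF.integrableOn
      integrable_gaussPDF.integrableOn]
    ring
  rw [heq]
  exact ((continuous_gaussPDF.integral_hasStrictDerivAt 0 p).hasDerivAt).const_add _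


lemma setIntegral_Ioi_pos {f : ℝ → ℝ} {a : ℝ} (hf : IntegrableOn f (Ioi a))
    (hpos : ∀ t ∈ Ioi a, 0 < f t) : 0 < ∫ t in Ioi a, f t := by
  rw [setIntegral_pos_iff_support_of_nonneg_ae
    ((ae_restrict_iff' measurableSet_Ioi).mpr (ae_of_all _ fun t ht => (hpos t ht).le)) hf]
  refine lt_of_lt_of_le ?_ (measure_mono (fun t ht => ⟨(hpos t ht).ne', ht⟩ :
    Ioi a ⊆ Function.support f ∩ Ioi a))
  simp [Real.volume_Ioi]

lemma mills_ineq (u : ℝ) : u * (1 - gaussCDF u) < gaussPDF u := by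
  have h : 0 < ∫ t in Ioi u, ((t - u) * gaussPDF t) := by
    apply setIntegral_Ioi_pos
    · have : IntegrableOn (fun t => t * gaussPDF t - u * gaussPDF t) (Ioi u) :=
        (integrable_mul_gaussPDF.integrableOn).sub
          ((integrable_gaussPDF.integrableOn).const_mul u)
      exact this.congr_fun (fun t _ => by ring) measurableSet_Ioi
    · intro t ht
      exact mul_pos (by simpa [sub_pos] using ht) (gaussPDF_pos t)
  have heq : ∫ t in Ioi u, ((t - u) * gaussPDF t)
      = gaussPDF u - u * (1 - gaussCDF u) := by
    have : ∫ t in Ioi u, ((t - u) * gaussPDF t)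
        = (∫ t in Ioi u, t * gaussPDF t) - u * ∫ t in Ioi u, gaussPDF t := by
      rw [← integral_const_mul, ← integral_sub integrable_mul_gaussPDF.integrableOn
        ((integrable_gaussPDF.integrableOn).const_mul u)]
      congr 1; ext t; ring
    rw [this, integral_Ioi_mul_gaussPDF, integral_Ioi_gaussPDF]
  linarith [heq ▸ h]

lemma gaussCDF_lt_one (a : ℝ) : gaussCDF a < 1 := by
  have := setIntegral_Ioi_pos (a := a) integrable_gaussPDF.integrableOn
    (fun t _ => gaussPDF_pos t)
  rw [integral_Ioi_gaussPDF] at this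
  linarith

/-- The Mills ratio. -/
noncomputable def millsR (u : ℝ) : ℝ := (1 - gaussCDF u) / gaussPDF u

lemma millsR_pos (u : ℝ) : 0 < millsR u :=
  div_pos (by linarith [gaussCDF_lt_one u]) (gaussPDF_pos u)

lemma hasDerivAt_millsR (u : ℝ) : HasDerivAt millsR (u * millsR u - 1) u := by
  have hne := (gaussPDF_pos u).ne'
  have h := (((hasDerivAt_gaussCDF u).const_sub 1).div (hasDerivAt_gaussPDF u) hne)
  refine h.congr_deriv ?_
  unfold millsR
  field_simp
  ring

lemma strictAnti_millsR : StrictAnti millsR := by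
  apply strictAnti_of_deriv_neg
  intro u
  rw [(hasDerivAt_millsR u).deriv]
  have h := mills_ineq u
  have hp := gaussPDF_pos u
  have : u * millsR u < 1 := by
    unfold millsR
    rw [mul_div_assoc']
    exact (div_lt_one hp).mpr h
  linarith

lemma continuous_millsR : Continuous millsR := by
  have : Differentiable ℝ millsR := fun u => (hasDerivAt_millsR u).differentiableAt
  exact this.continuous

lemma tendsto_gaussPDF_atBot : Tendsto gaussPDF atBot (𝓝 0) := by
  have heven : ∀ t : ℝ, gaussPDF (-t) = gaussPDF t := by
    intro t; unfold gaussPDF; norm_num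
  have h : Tendsto (fun t => gaussPDF (-t)) atBot (𝓝 0) :=
    tendsto_gaussPDF_atTop.comp tendsto_neg_atBot_atTop
  exact (funext heven : (fun t => gaussPDF (-t)) = gaussPDF) ▸ h

lemma integrable_neg_mul_gaussPDF : Integrable (fun t => -t * gaussPDF t) :=
  integrable_mul_gaussPDF.neg.congr (ae_of_all _ fun t => (neg_mul t (gaussPDF t)).symm)

lemma integral_Iic_neg_mul_gaussPDF (a : ℝ) :
    ∫ t in Iic a, (-t * gaussPDF t) = gaussPDF a := by
  have h := integral_Iic_of_hasDerivAt_of_tendsto' (f := gaussPDF)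
    (f' := fun t => -t * gaussPDF t) (a := a) (m := 0)
    (fun t _ => hasDerivAt_gaussPDF t)
    integrable_neg_mul_gaussPDF.integrableOn
    tendsto_gaussPDF_atBot
  simpa using h

lemma gaussCDF_le_gaussPDF {a : ℝ} (ha : a ≤ -1) : gaussCDF a ≤ gaussPDF a := by
  have h1 : gaussCDF a ≤ ∫ t in Iic a, (-t * gaussPDF t) := by
    unfold gaussCDF
    apply setIntegral_mono_on integrable_gaussPDF.integrableOn
      integrable_neg_mul_gaussPDF.integrableOn measurableSet_Iic
    intro t ht
    have ht1 : (1 : ℝ) ≤ -t := by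
      simp only [mem_Iic] at ht; linarith
    nlinarith [gaussPDF_pos t]
  rw [integral_Iic_neg_mul_gaussPDF] at h1
  exact h1

lemma exists_millsR_gt (c : ℝ) : ∃ a : ℝ, c < millsR a := by
  have hinv : Tendsto (fun a => (gaussPDF a)⁻¹) atBot atTop := by
    apply Filter.Tendsto.inv_tendsto_nhdsGT_zero
    rw [tendsto_nhdsWithin_iff]
    exact ⟨tendsto_gaussPDF_atBot, Eventually.of_forall fun a => gaussPDF_pos a⟩
  have h1 : ∀ᶠ a in atBot, c + 1 < (gaussPDF a)⁻¹ := hinv.eventually_gt_atTop (c + 1)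
  have h2 : ∀ᶠ a : ℝ in atBot, a ≤ -1 := eventually_le_atBot (-1)
  obtain ⟨a, ha1, ha2⟩ := (h1.and h2).exists
  refine ⟨a, ?_⟩
  have hp := gaussPDF_pos a
  have hle := gaussCDF_le_gaussPDF ha2
  have key : (1 - gaussPDF a) / gaussPDF a ≤ millsR a := by
    unfold millsR
    gcongr
  have heq : (1 - gaussPDF a) / gaussPDF a = (gaussPDF a)⁻¹ - 1 := by
    field_simp
  rw [heq] at key
  linarith

lemma exists_millsR_lt {c : ℝ} (hc : 0 < c) : ∃ b : ℝ, millsR b < c := by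
  refine ⟨1/c + 1, ?_⟩
  set b := 1/c + 1 with hb
  have hb0 : 0 < b := by positivity
  have h := mills_ineq b
  have hp := gaussPDF_pos b
  have h1 : millsR b < 1 / b := by
    unfold millsR
    rw [div_lt_div_iff₀ hp hb0]
    linarith [mills_ineq b]
  have h2 : 1 / b < c := by
    rw [div_lt_iff₀ hb0]
    have h3 : 1 / c < b := by rw [hb]; linarith
    calc (1:ℝ) = c * (1/c) := by field_simp
    _ < c * b := mul_lt_mul_of_pos_left h3 hc
  linarith

lemma exists_millsR_eq {c : ℝ} (hc : 0 < c) : ∃ u : ℝ, millsR u = c := by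
  obtain ⟨a, ha⟩ := exists_millsR_gt c
  obtain ⟨b, hb⟩ := exists_millsR_lt hc
  have hab : a ≤ b := by
    by_contra h
    push_neg at h
    exact absurd (strictAnti_millsR h) (by linarith)
  have := intermediate_value_Icc' hab continuous_millsR.continuousOn
  obtain ⟨u, _, hu⟩ := this ⟨hb.le, ha.le⟩
  exact ⟨u, hu⟩

lemma Agauss_eq (σ p x : ℝ) (hσ : 0 < σ) :
    Agauss σ p x = (p - x) * (1 - gaussCDF (p / σ)) - σ * gaussPDF (p / σ) := by
  have hset : {t : ℝ | σ * t > p} = Ioi (p / σ) := by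
    ext t
    simp only [mem_setOf_eq, mem_Ioi, gt_iff_lt]
    rw [div_lt_iff₀ hσ, mul_comm]
  have hd : gaussianReal 0 1 = volume.withDensity
      (fun t => ((gaussianPDFReal 0 1 t).toNNReal : ℝ≥0∞)) := by
    rw [gaussianReal_of_var_ne_zero 0 one_ne_zero]
    rfl
  unfold Agauss
  rw [hset, hd, setIntegral_withDensity_eq_setIntegral_smul
    ((measurable_gaussianPDFReal 0 1).real_toNNReal) _ measurableSet_Ioi]
  calc ∫ t in Ioi (p/σ), (gaussianPDFReal 0 1 t).toNNReal • (p - x - σ * t)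
      = ∫ t in Ioi (p/σ), ((p - x) * gaussPDF t - σ * (t * gaussPDF t)) := by
        apply setIntegral_congr_fun measurableSet_Ioi
        intro t _
        show (gaussianPDFReal 0 1 t).toNNReal • (p - x - σ * t) = _
        rw [NNReal.smul_def, Real.coe_toNNReal _ (gaussianPDFReal_nonneg 0 1 t), ← gaussPDF_eq,
          smul_eq_mul]
        ring
    _ = (p - x) * (∫ t in Ioi (p/σ), gaussPDF t) - σ * ∫ t in Ioi (p/σ), t * gaussPDF t := by
        rw [integral_sub ((integrable_gaussPDF.integrableOn).const_mul _)
          ((integrable_mul_gaussPDF.integrableOn).const_mul _),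
          integral_const_mul, integral_const_mul]
    _ = (p - x) * (1 - gaussCDF (p/σ)) - σ * gaussPDF (p/σ) := by
        rw [integral_Ioi_gaussPDF, integral_Ioi_mul_gaussPDF]

lemma hasDerivAt_Agauss (σ x p : ℝ) (hσ : 0 < σ) :
    HasDerivAt (fun p => Agauss σ p x)
      (gaussPDF (p / σ) * (millsR (p / σ) - (-x / σ))) p := by
  have hσ' : σ ≠ 0 := hσ.ne'
  have hΦ : HasDerivAt (fun q : ℝ => gaussCDF (q / σ)) (gaussPDF (p / σ) * (1 / σ)) p := by
    have := (hasDerivAt_gaussCDF (p / σ)).comp p ((hasDerivAt_id p).div_const σ)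
    exact this
  have hφ : HasDerivAt (fun q : ℝ => gaussPDF (q / σ))
      (-(p / σ) * gaussPDF (p / σ) * (1 / σ)) p := by
    have := (hasDerivAt_gaussPDF (p / σ)).comp p ((hasDerivAt_id p).div_const σ)
    exact this
  have h : HasDerivAt (fun q : ℝ => (q - x) * (1 - gaussCDF (q / σ)) - σ * gaussPDF (q / σ))
      (1 * (1 - gaussCDF (p / σ)) + (p - x) * (-(gaussPDF (p / σ) * (1 / σ)))
        - σ * (-(p / σ) * gaussPDF (p / σ) * (1 / σ))) p :=
    (((hasDerivAt_id p).sub_const x).mul (hΦ.const_sub 1)).sub (hφ.const_mul σ)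
  have heq : (fun p => Agauss σ p x)
      = fun q => (q - x) * (1 - gaussCDF (q / σ)) - σ * gaussPDF (q / σ) := by
    funext q; exact Agauss_eq σ q x hσ
  rw [heq]
  convert h using 1
  unfold millsR
  have hcan : gaussPDF (p / σ) * ((1 - gaussCDF (p / σ)) / gaussPDF (p / σ))
      = 1 - gaussCDF (p / σ) := by
    rw [mul_div_assoc']
    exact mul_div_cancel_left₀ _ ((gaussPDF_pos _).ne')
  rw [mul_sub, hcan]
  field_simp
  ring

/-- Property (i) in the proof of the paper's Lemma 6.3: for `σ > 0` and `x < 0`, the map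
`p ↦ A_σ(p; x)` has a unique maximizer `p_σ(x)`, is strictly increasing on `(−∞, p_σ(x)]`
and strictly decreasing on `[p_σ(x), ∞)`, and `p_σ(x)` is the unique real solution of
`(1 − Φ(p/σ))/φ(p/σ) = −x/σ`. -/
theorem stmt6 (σ x : ℝ) (hσ : 0 < σ) (hx : x < 0) :
    ∃! pstar : ℝ,
      (∀ p : ℝ, Agauss σ p x ≤ Agauss σ pstar x) ∧
      StrictMonoOn (fun p => Agauss σ p x) (Iic pstar) ∧
      StrictAntiOn (fun p => Agauss σ p x) (Ici pstar) ∧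
      (1 - gaussCDF (pstar / σ)) / gaussPDF (pstar / σ) = -x / σ ∧
      ∀ p : ℝ, (1 - gaussCDF (p / σ)) / gaussPDF (p / σ) = -x / σ → p = pstar := by
  have hσ' : σ ≠ 0 := hσ.ne'
  set c : ℝ := -x / σ with hc
  have hc0 : 0 < c := div_pos (by linarith) hσ
  obtain ⟨u, hu⟩ := exists_millsR_eq hc0
  set pstar : ℝ := σ * u with hps
  have hdiv : pstar / σ = u := by field_simp [hps, mul_comm]; exact hps
  have huniq : ∀ p : ℝ, (1 - gaussCDF (p / σ)) / gaussPDF (p / σ) = -x / σ → p = pstar := by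
    intro p hp
    have : millsR (p / σ) = millsR u := by rw [hu]; exact hp
    have := strictAnti_millsR.injective this
    rw [hps, ← this]
    field_simp
  have hderiv : ∀ p : ℝ, deriv (fun p => Agauss σ p x) p
      = gaussPDF (p / σ) * (millsR (p / σ) - c) := fun p => (hasDerivAt_Agauss σ x p hσ).deriv
  have hcont : Continuous (fun p => Agauss σ p x) :=
    Differentiable.continuous fun p => (hasDerivAt_Agauss σ x p hσ).differentiableAt
  have hlt : ∀ p : ℝ, p < pstar → 0 < deriv (fun p => Agauss σ p x) p := by
    intro p hp
    rw [hderiv]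
    have h1 : p / σ < u := by
      rw [div_lt_iff₀ hσ]
      rw [hps] at hp; linarith [hp, mul_comm u σ]
    have h2 : c < millsR (p / σ) := hu ▸ strictAnti_millsR h1
    exact mul_pos (gaussPDF_pos _) (by linarith)
  have hgt : ∀ p : ℝ, pstar < p → deriv (fun p => Agauss σ p x) p < 0 := by
    intro p hp
    rw [hderiv]
    have h1 : u < p / σ := by
      rw [lt_div_iff₀ hσ]
      rw [hps] at hp; linarith [hp, mul_comm u σ]
    have h2 : millsR (p / σ) < c := hu ▸ strictAnti_millsR h1
    have := gaussPDF_pos (p / σ)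
    nlinarith
  have hmono : StrictMonoOn (fun p => Agauss σ p x) (Iic pstar) := by
    apply strictMonoOn_of_deriv_pos (convex_Iic pstar) hcont.continuousOn
    intro p hp
    rw [interior_Iic, mem_Iio] at hp
    exact hlt p hp
  have hanti : StrictAntiOn (fun p => Agauss σ p x) (Ici pstar) := by
    apply strictAntiOn_of_deriv_neg (convex_Ici pstar) hcont.continuousOn
    intro p hp
    rw [interior_Ici, mem_Ioi] at hp
    exact hgt p hp
  refine ⟨pstar, ⟨?_, hmono, hanti, ?_, huniq⟩, ?_⟩
  · intro p
    rcases lt_trichotomy p pstar with h | h | h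
    · exact (hmono (mem_Iic.mpr h.le) (mem_Iic.mpr le_rfl) h).le
    · rw [h]
    · exact (hanti (mem_Ici.mpr le_rfl) (mem_Ici.mpr h.le) h).le
  · rw [hdiv]
    exact hu
  · rintro y ⟨-, -, -, hy4, -⟩
    exact huniq y hy4
end

section
/- Let ξ be an integrable real random variable and fix p ≤ 0. Then the function x ↦ E[(p − x − ξ) · 1_{ξ > p}] − sup_{y ≥ 0} E[(y − x − ξ) · 1_{ξ > y}] is non-increasing on ℝ (the supremum over y ≥ 0 being finite for every x). -/
open MeasureTheory ProbabilityTheory Filter Set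

/-- Monotonicity-in-`x` claim from the proof of the paper's Lemma 6.3: for integrable `ξ`
and fixed `p ≤ 0`, the map
`x ↦ E[(p − x − ξ)·1_{ξ > p}] − sup_{y ≥ 0} E[(y − x − ξ)·1_{ξ > y}]`
is non-increasing on `ℝ`, the supremum over `y ≥ 0` being finite for every `x`. -/
theorem stmt9 (Ω : Type) [MeasurableSpace Ω] (P : Measure Ω) [IsProbabilityMeasure P]
    (ξ : Ω → ℝ) (hξ : Measurable ξ) (hInt : Integrable ξ P)
    (p : ℝ) (hp : p ≤ 0) :
    (∀ x : ℝ, BddAbove ((fun y => ∫ ω in {ω | ξ ω > y}, (y - x - ξ ω) ∂P) '' Ici 0)) ∧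
    Antitone (fun x =>
      (∫ ω in {ω | ξ ω > p}, (p - x - ξ ω) ∂P)
        - sSup ((fun y => ∫ ω in {ω | ξ ω > y}, (y - x - ξ ω) ∂P) '' Ici 0)) := by
  have hmeas : ∀ y : ℝ, MeasurableSet {ω | ξ ω > y} := fun y =>
    measurableSet_lt measurable_const hξ
  set μ := fun y : ℝ => (P {ω | ξ ω > y}).toReal with hμdef
  have hμ0 : ∀ y, 0 ≤ μ y := fun y => ENNReal.toReal_nonneg
  have hμ1 : ∀ y, μ y ≤ 1 := by
    intro y
    have := prob_le_one (μ := P) (s := {ω | ξ ω > y})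
    have h := ENNReal.toReal_mono (by simp) this
    simpa using h
  have hInt' : ∀ (x y : ℝ), Integrable (fun ω => y - x - ξ ω) (P.restrict {ω | ξ ω > y}) :=
    fun x y => (integrable_const (y - x)).sub hInt.restrict
  set g := fun (x y : ℝ) => ∫ ω in {ω | ξ ω > y}, (y - x - ξ ω) ∂P with hgdef
  -- bound: g x y ≤ |x|
  have hbound : ∀ x y : ℝ, g x y ≤ |x| := by
    intro x y
    have h1 : g x y ≤ ∫ _ω in {ω | ξ ω > y}, (-x) ∂P := by
      apply setIntegral_mono_on (hInt' x y) (integrable_const _) (hmeas y)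
      intro ω hω
      have : y < ξ ω := hω
      linarith
    have h2 : (∫ _ω in {ω | ξ ω > y}, (-x) ∂P) = (-x) * μ y := by
      rw [setIntegral_const, smul_eq_mul, Measure.real]; ring
    have h3 : (-x) * μ y ≤ |x| * μ y :=
      mul_le_mul_of_nonneg_right (neg_le_abs x) (hμ0 y)
    have h4 : |x| * μ y ≤ |x| * 1 :=
      mul_le_mul_of_nonneg_left (hμ1 y) (abs_nonneg x)
    calc g x y ≤ (-x) * μ y := by rw [← h2]; exact h1
      _ ≤ |x| := by nlinarith [abs_nonneg x]
  have hbdd : ∀ x : ℝ, BddAbove ((fun y => g x y) '' Ici 0) := by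
    intro x
    refine ⟨|x|, ?_⟩
    rintro z ⟨y, _, rfl⟩
    exact hbound x y
  refine ⟨hbdd, ?_⟩
  -- decomposition
  have hdec : ∀ (x x' y : ℝ), g x y = g x' y + (x' - x) * μ y := by
    intro x x' y
    have : (fun ω => y - x - ξ ω) = fun ω => (y - x' - ξ ω) + (x' - x) := by
      funext ω; ring
    rw [hgdef]
    simp only [this]
    rw [integral_add (hInt' x' y) (integrable_const _), setIntegral_const, smul_eq_mul]; rw [hμdef]; simp only [Measure.real]; ring
  have hμmono : ∀ y : ℝ, 0 ≤ y → μ y ≤ μ p := by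
    intro y hy
    apply ENNReal.toReal_mono (measure_ne_top P _)
    apply measure_mono
    intro ω hω
    exact lt_of_le_of_lt (hp.trans hy) hω
  intro x₁ x₂ hx
  simp only
  set S := fun x : ℝ => sSup ((fun y => g x y) '' Ici 0) with hSdef
  have hne : ∀ x : ℝ, ((fun y => g x y) '' Ici 0).Nonempty :=
    fun x => ⟨g x 0, ⟨0, self_mem_Ici, rfl⟩⟩
  have hS : S x₁ ≤ S x₂ + (x₂ - x₁) * μ p := by
    apply csSup_le (hne x₁)
    rintro z ⟨y, hy, rfl⟩
    have h1 : g x₁ y = g x₂ y + (x₂ - x₁) * μ y := hdec x₁ x₂ y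
    have h2 : g x₂ y ≤ S x₂ := le_csSup (hbdd x₂) ⟨y, hy, rfl⟩
    have h3 : (x₂ - x₁) * μ y ≤ (x₂ - x₁) * μ p :=
      mul_le_mul_of_nonneg_left (hμmono y hy) (by linarith)
    linarith
  have hgp : g x₂ p = g x₁ p - (x₂ - x₁) * μ p := by
    have := hdec x₁ x₂ p; linarith
  show g x₂ p - S x₂ ≤ g x₁ p - S x₁
  linarith
end

section
/- Let σ > 0, let ξ be a real random variable with law N(0, σ²), and let λ < 0. Then for every p ∈ ℝ: λ + max(0, E[(p − λ − ξ) · 1_{ξ > p}]) < 0. -/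
open MeasureTheory ProbabilityTheory Filter Set

/-- Induction step from Section 3 of the paper (market-neutral case): if `ξ ~ N(0, σ²)`
and `λ < 0`, then for every `p`, `λ + (E[(p − λ − ξ)·1_{ξ > p}])⁺ < 0`. -/
theorem stmt10 (Ω : Type) [MeasurableSpace Ω] (P : Measure Ω) [IsProbabilityMeasure P]
    (ξ : Ω → ℝ) (hξ : Measurable ξ) (σ : ℝ) (hσ : 0 < σ)
    (hlaw : Measure.map ξ P = gaussianReal 0 ((σ ^ 2).toNNReal))
    (lam : ℝ) (hlam : lam < 0) (p : ℝ) :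
    lam + max 0 (∫ ω in {ω | ξ ω > p}, (p - lam - ξ ω) ∂P) < 0 := by
  have hv : ((σ ^ 2).toNNReal : NNReal) ≠ 0 := by
    simp only [ne_eq, Real.toNNReal_eq_zero, not_le]
    positivity
  have hS : MeasurableSet {ω | ξ ω > p} := hξ measurableSet_Ioi
  -- the set has measure < 1
  have hPS : P {ω | ξ ω > p} < 1 := by
    have hmap : P {ω | ξ ω > p} = (Measure.map ξ P) (Ioi p) := by
      rw [Measure.map_apply hξ measurableSet_Ioi]; rfl
    rw [hmap, hlaw]
    have hIic : 0 < gaussianReal 0 ((σ ^ 2).toNNReal) (Iic p) := by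
      rcases eq_or_lt_of_le (zero_le : (0 : ENNReal) ≤ gaussianReal 0 ((σ ^ 2).toNNReal) (Iic p)) with h | h
      · exfalso
        have := (gaussianReal_absolutelyContinuous' 0 hv) h.symm
        simp at this
      · exact h
    have hcompl : (Ioi p : Set ℝ) = (Iic p)ᶜ := by
      ext x; simp
    rw [hcompl, measure_compl measurableSet_Iic (measure_ne_top _ _)]
    rw [measure_univ]
    exact ENNReal.sub_lt_self ENNReal.one_ne_top one_ne_zero hIic.ne'
  have hlt : (P {ω | ξ ω > p}).toReal < 1 := by
    rw [← ENNReal.toReal_one]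
    exact ENNReal.toReal_strict_mono ENNReal.one_ne_top hPS
  have hI : (∫ ω in {ω | ξ ω > p}, (p - lam - ξ ω) ∂P) < -lam := by
    by_cases hint : IntegrableOn (fun ω => p - lam - ξ ω) {ω | ξ ω > p} P
    · have h1 : (∫ ω in {ω | ξ ω > p}, (p - lam - ξ ω) ∂P)
          ≤ ∫ _ω in {ω | ξ ω > p}, (-lam) ∂P := by
        apply setIntegral_mono_on hint (integrableOn_const (measure_lt_top _ _).ne) hS
        intro ω hω
        have : p < ξ ω := hω
        linarith
      have h2 : (∫ _ω in {ω | ξ ω > p}, (-lam) ∂P) = (P {ω | ξ ω > p}).toReal * (-lam) := by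
        rw [setIntegral_const, smul_eq_mul]; rfl
      calc (∫ ω in {ω | ξ ω > p}, (p - lam - ξ ω) ∂P)
          ≤ (P {ω | ξ ω > p}).toReal * (-lam) := h1.trans h2.le
        _ < 1 * (-lam) := by
            apply mul_lt_mul_of_pos_right hlt; linarith
        _ = -lam := one_mul _
    · rw [integral_undef hint]; linarith
  have : max 0 (∫ ω in {ω | ξ ω > p}, (p - lam - ξ ω) ∂P) < -lam :=
    max_lt (by linarith) hI
  linarith
end

section
/- For all constants 0 < c ≤ C there exists ε > 0, depending only on c and C, with the following property. Suppose σ ∈ [c, C] and the drift satisfies |μ_t(ω)| ≤ √ε for all t ∈ [0, 1], P-almost surely. Then for every c₁ > 0 there exists C₁ > 0, depending only on (c, C, ε, c₁), such that P(X₁ > x + z) ≤ C₁ · e^{−c₁ z} · P(X₁ > x) for all x, z ≥ 0; equivalently, P(X₁ > x + z | X₁ > x) ≤ C₁ · e^{−c₁ z}. -/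
open MeasureTheory ProbabilityTheory Filter Set

private lemma gauss_tail12 {a b : ℝ} (ha : 0 ≤ a) (hb : 0 ≤ b) :
    gaussianReal 0 1 (Ioi (a + b)) ≤
      ENNReal.ofReal (Real.exp (-(b^2)/2)) * gaussianReal 0 1 (Ioi a) := by
  rw [gaussianReal_apply 0 one_ne_zero, gaussianReal_apply 0 one_ne_zero]
  have hpre : (fun x : ℝ => x + b) ⁻¹' Ioi (a + b) = Ioi a := by
    ext x; simp [mem_Ioi]
  calc ∫⁻ x in Ioi (a+b), gaussianPDF 0 1 x
      = ∫⁻ x in Ioi a, gaussianPDF 0 1 (x + b) := by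
        rw [← hpre, (measurePreserving_add_right volume b).setLIntegral_comp_preimage_emb
          (MeasurableEquiv.addRight b).measurableEmbedding]
    _ ≤ ∫⁻ x in Ioi a, ENNReal.ofReal (Real.exp (-(b^2)/2)) * gaussianPDF 0 1 x := by
        refine setLIntegral_mono ((measurable_gaussianPDF 0 1).const_mul _) fun x hx => ?_
        have hx' : a < x := hx
        rw [gaussianPDF, gaussianPDF, ← ENNReal.ofReal_mul (Real.exp_nonneg _)]
        refine ENNReal.ofReal_le_ofReal ?_
        simp only [gaussianPDFReal, NNReal.coe_one, mul_one, sub_zero]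
        rw [mul_comm (Real.exp (-(b^2)/2)), mul_assoc, ← Real.exp_add]
        refine mul_le_mul_of_nonneg_left ?_ (by positivity)
        refine Real.exp_le_exp.mpr ?_
        nlinarith [mul_nonneg (ha.trans hx'.le) hb]
    _ = ENNReal.ofReal (Real.exp (-(b^2)/2)) * ∫⁻ x in Ioi a, gaussianPDF 0 1 x := by
        rw [lintegral_const_mul _ (measurable_gaussianPDF 0 1)]

/-- Constant-diffusion-coefficient case of the paper's Lemma 5.2: for all `0 < c ≤ C`
there exists `ε > 0` (depending only on `c, C`) such that for every `c₁ > 0` there is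
`C₁ > 0` (depending only on `c, C, ε, c₁`) with the following property. For every
filtered probability space carrying a Brownian motion `B`, a progressively measurable
drift `μ` with `|μ_t| ≤ √ε` a.s. on `[0,1]`, and a constant `σ ∈ [c, C]`, the process
`X_t = ∫₀^t μ_u du + σ B_t` satisfies
`P(X₁ > x + z) ≤ C₁ e^{−c₁ z} P(X₁ > x)` for all `x, z ≥ 0`. -/
theorem stmt12 (c C : ℝ) (hc : 0 < c) (hcC : c ≤ C) :
    ∃ ε > (0 : ℝ), ∀ c₁ : ℝ, 0 < c₁ → ∃ C₁ > (0 : ℝ),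
      ∀ (Ω : Type) [mΩ : MeasurableSpace Ω] (P : Measure Ω), IsProbabilityMeasure P →
      ∀ (F : Filtration ℝ mΩ) (B : ℝ → Ω → ℝ) (μ : ℝ → Ω → ℝ) (σ : ℝ),
        (∀ ω, Continuous fun t => B t ω) →
        (∀ ω, B 0 ω = 0) →
        Adapted F B →
        (∀ s t : ℝ, 0 ≤ s → s ≤ t → t ≤ 1 →
          Measure.map (fun ω => B t ω - B s ω) P = gaussianReal 0 ((t - s).toNNReal)) →
        (∀ s t : ℝ, 0 ≤ s → s ≤ t → t ≤ 1 →
          Indep (MeasurableSpace.comap (fun ω => B t ω - B s ω)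
            (inferInstance : MeasurableSpace ℝ)) (F s) P) →
        ProgMeasurable F μ →
        σ ∈ Icc c C →
        (∀ᵐ ω ∂P, ∀ t ∈ Icc (0 : ℝ) 1, |μ t ω| ≤ Real.sqrt ε) →
        ∀ x z : ℝ, 0 ≤ x → 0 ≤ z →
          P {ω | x + z < (∫ u in (0 : ℝ)..1, μ u ω) + σ * B 1 ω}
            ≤ ENNReal.ofReal (C₁ * Real.exp (-c₁ * z)) *
              P {ω | x < (∫ u in (0 : ℝ)..1, μ u ω) + σ * B 1 ω} := by
  refine ⟨1, one_pos, fun c₁ hc₁ => ?_⟩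
  have hC0 : (0 : ℝ) < C := hc.trans_le hcC
  refine ⟨Real.exp (2 * c₁ + c₁^2 * C^2 / 2), Real.exp_pos _, ?_⟩
  intro Ω mΩ P hProb F B μ σ hBcont hB0 hBadapt hgauss hindep hprog hσ hμb x z hx hz
  have hσpos : 0 < σ := hc.trans_le hσ.1
  -- the drift integral is a.s. bounded by 1 in absolute value
  have hdrift : ∀ᵐ ω ∂P, |∫ u in (0:ℝ)..1, μ u ω| ≤ 1 := by
    filter_upwards [hμb] with ω hω
    have h := intervalIntegral.norm_integral_le_of_norm_le_const
      (a := (0:ℝ)) (b := 1) (C := 1) (f := fun u => μ u ω) ?_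
    · simpa using h
    · intro u hu
      rw [Set.uIoc_of_le zero_le_one] at hu
      have := hω u ⟨hu.1.le, hu.2⟩
      simpa [Real.norm_eq_abs] using this
  -- distribution of B 1
  have hBmeas : Measurable (B 1) := Measurable.mono (hBadapt 1) (F.le 1) le_rfl
  have hmap : Measure.map (B 1) P = gaussianReal 0 1 := by
    have h := hgauss 0 1 le_rfl zero_le_one le_rfl
    have he : (fun ω => B 1 ω - B 0 ω) = B 1 := by
      funext ω; rw [hB0, sub_zero]
    rw [he] at h
    simpa using h
  have hP : ∀ t : ℝ, P {ω | t < σ * B 1 ω} = gaussianReal 0 1 (Ioi (t / σ)) := by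
    intro t
    have hset : {ω | t < σ * B 1 ω} = B 1 ⁻¹' Ioi (t / σ) := by
      ext ω; simp [mem_Ioi, div_lt_iff₀' hσpos]
    rw [hset, ← Measure.map_apply hBmeas measurableSet_Ioi, hmap]
  -- sandwich bounds
  have hupper : ∀ y : ℝ,
      P {ω | y < (∫ u in (0:ℝ)..1, μ u ω) + σ * B 1 ω} ≤ P {ω | y - 1 < σ * B 1 ω} := by
    intro y
    refine measure_mono_ae ?_
    filter_upwards [hdrift] with ω h1 h2
    have h1' := abs_le.mp h1
    have h2' : y < (∫ u in (0:ℝ)..1, μ u ω) + σ * B 1 ω := h2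
    show y - 1 < σ * B 1 ω
    linarith [h1'.2]
  have hlower : ∀ y : ℝ,
      P {ω | y + 1 < σ * B 1 ω} ≤ P {ω | y < (∫ u in (0:ℝ)..1, μ u ω) + σ * B 1 ω} := by
    intro y
    refine measure_mono_ae ?_
    filter_upwards [hdrift] with ω h1 h2
    have h1' := abs_le.mp h1
    have h2' : y + 1 < σ * B 1 ω := h2
    show y < (∫ u in (0:ℝ)..1, μ u ω) + σ * B 1 ω
    linarith [h1'.1]
  rcases le_total z 2 with hz2 | hz2
  · -- small z: use monotonicity
    have hsub : P {ω | x + z < (∫ u in (0:ℝ)..1, μ u ω) + σ * B 1 ω}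
        ≤ P {ω | x < (∫ u in (0:ℝ)..1, μ u ω) + σ * B 1 ω} := by
      refine measure_mono fun ω hω => ?_
      simp only [Set.mem_setOf_eq] at hω ⊢
      linarith
    refine hsub.trans ?_
    refine le_mul_of_one_le_left zero_le ?_
    rw [← Real.exp_add]
    refine ENNReal.one_le_ofReal.mpr (Real.one_le_exp ?_)
    nlinarith [mul_nonneg hc₁.le (sub_nonneg.mpr hz2), sq_nonneg (c₁ * C)]
  · -- large z: Gaussian tail bound
    set a : ℝ := (x + 1) / σ with ha_def
    set b : ℝ := (z - 2) / σ with hb_def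
    have ha : 0 ≤ a := div_nonneg (by linarith) hσpos.le
    have hb : 0 ≤ b := div_nonneg (by linarith) hσpos.le
    have hab : a + b = (x + z - 1) / σ := by
      rw [ha_def, hb_def, ← add_div]
      congr 1; ring
    have hbσ : b * σ = z - 2 := div_mul_cancel₀ _ hσpos.ne'
    have key : Real.exp (-(b^2)/2) ≤ Real.exp (2 * c₁ + c₁^2 * C^2 / 2) * Real.exp (-c₁ * z) := by
      rw [← Real.exp_add]
      refine Real.exp_le_exp.mpr ?_
      have hbC : b * σ ≤ b * C := mul_le_mul_of_nonneg_left hσ.2 hb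
      nlinarith [sq_nonneg (b - c₁ * C), mul_le_mul_of_nonneg_left hbC hc₁.le]
    calc P {ω | x + z < (∫ u in (0:ℝ)..1, μ u ω) + σ * B 1 ω}
        ≤ P {ω | x + z - 1 < σ * B 1 ω} := hupper (x + z)
      _ = gaussianReal 0 1 (Ioi (a + b)) := by rw [hP, hab]
      _ ≤ ENNReal.ofReal (Real.exp (-(b^2)/2)) * gaussianReal 0 1 (Ioi a) :=
          gauss_tail12 ha hb
      _ = ENNReal.ofReal (Real.exp (-(b^2)/2)) * P {ω | x + 1 < σ * B 1 ω} := by rw [hP]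
      _ ≤ ENNReal.ofReal (Real.exp (-(b^2)/2)) *
            P {ω | x < (∫ u in (0:ℝ)..1, μ u ω) + σ * B 1 ω} :=
          mul_le_mul_right (hlower x) _
      _ ≤ ENNReal.ofReal (Real.exp (2 * c₁ + c₁^2 * C^2 / 2) * Real.exp (-c₁ * z)) *
            P {ω | x < (∫ u in (0:ℝ)..1, μ u ω) + σ * B 1 ω} :=
          mul_le_mul_left (ENNReal.ofReal_le_ofReal key) _
end

section
/- Suppose σ ≥ c > 0 and the drift satisfies |μ_t(ω)| ≤ √ε for all t ∈ [0, 1], P-almost surely, for some ε ≥ 0. Then for every x ≥ 0: P(X₁ > x) ≥ (1/2 − √ε / (c·√(2π))) · P(sup_{t∈[0,1]} X_t > x). -/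
open MeasureTheory ProbabilityTheory Filter Set Topology
open scoped NNReal ENNReal
set_option maxHeartbeats 1000000

lemma gauss_half (v : ℝ≥0) (hv : v ≠ 0) : gaussianReal 0 v (Set.Iic 0) = 1/2 := by
  have hmap : (gaussianReal 0 v).map (fun y : ℝ => -y) = gaussianReal 0 v := by
    have := gaussianReal_map_const_mul (μ := 0) (v := v) (-1)
    simp only [neg_one_mul, mul_zero] at this
    rw [this]
    congr 1
    ext
    simp
  have h0 : gaussianReal 0 v {(0:ℝ)} = 0 :=
    gaussianReal_absolutelyContinuous 0 hv (by simp)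
  have hIci : gaussianReal 0 v (Set.Ici (0:ℝ)) = gaussianReal 0 v (Set.Iic 0) := by
    conv_lhs => rw [← hmap]
    rw [Measure.map_apply measurable_neg measurableSet_Ici]
    congr 1
    ext y
    simp
  have hIoi : gaussianReal 0 v (Set.Ioi (0:ℝ)) = gaussianReal 0 v (Set.Iic 0) := by
    rw [← hIci]
    rw [show Set.Ioi (0:ℝ) = Set.Ici 0 \ {0} by ext y; simp [lt_iff_le_and_ne, ne_comm],
      measure_diff_null h0]
  have hsplit : gaussianReal 0 v (Set.Iic (0:ℝ)) + gaussianReal 0 v (Set.Ioi 0) = 1 := by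
    rw [← measure_union (by simp [Set.disjoint_left]) measurableSet_Ioi]
    simp [Set.Iic_union_Ioi]
  rw [hIoi, ← two_mul] at hsplit
  exact (ENNReal.eq_div_iff two_ne_zero ENNReal.ofNat_ne_top).2 hsplit

lemma gauss_Iic_le (v : ℝ≥0) (hv : v ≠ 0) (a : ℝ) (ha : 0 ≤ a) :
    gaussianReal 0 v (Set.Iic a) ≤ ENNReal.ofReal (1/2 + a / Real.sqrt (2 * Real.pi * v)) := by
  have hsub : Set.Iic a ⊆ Set.Iic 0 ∪ Set.Ioc 0 a := by
    intro y hy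
    rcases le_or_gt y 0 with h | h
    · exact Or.inl h
    · exact Or.inr ⟨h, hy⟩
  have hIoc : gaussianReal 0 v (Set.Ioc 0 a) ≤
      ENNReal.ofReal (a / Real.sqrt (2 * Real.pi * v)) := by
    rw [gaussianReal_apply_eq_integral _ hv]
    apply ENNReal.ofReal_le_ofReal
    have hpdf_le : ∀ y ∈ Set.Ioc (0:ℝ) a,
        gaussianPDFReal 0 v y ≤ (Real.sqrt (2 * Real.pi * v))⁻¹ := by
      intro y _
      rw [gaussianPDFReal]
      have h1 : Real.exp (-(y - 0)^2 / (2 * v)) ≤ 1 := by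
        apply Real.exp_le_one_iff.2
        apply div_nonpos_of_nonpos_of_nonneg
        · simp [sq_nonneg]
        · positivity
      calc (Real.sqrt (2 * Real.pi * v))⁻¹ * Real.exp (-(y - 0)^2 / (2 * v))
          ≤ (Real.sqrt (2 * Real.pi * v))⁻¹ * 1 := by
            apply mul_le_mul_of_nonneg_left h1 (by positivity)
        _ = (Real.sqrt (2 * Real.pi * v))⁻¹ := mul_one _
    calc ∫ y in Set.Ioc 0 a, gaussianPDFReal 0 v y
        ≤ ∫ _ in Set.Ioc 0 a, (Real.sqrt (2 * Real.pi * v))⁻¹ := by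
          apply setIntegral_mono_on
          · exact (integrable_gaussianPDFReal 0 v).integrableOn
          · exact integrableOn_const (by simp [Real.volume_Ioc]) enorm_ne_top
          · exact measurableSet_Ioc
          · exact hpdf_le
      _ = a * (Real.sqrt (2 * Real.pi * v))⁻¹ := by
          rw [setIntegral_const]
          simp [Real.volume_Ioc, ENNReal.toReal_ofReal ha, ha]
      _ = a / Real.sqrt (2 * Real.pi * v) := by rw [div_eq_mul_inv]
  calc gaussianReal 0 v (Set.Iic a)
      ≤ gaussianReal 0 v (Set.Iic 0) + gaussianReal 0 v (Set.Ioc 0 a) :=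
        le_trans (measure_mono hsub) (measure_union_le _ _)
    _ ≤ ENNReal.ofReal (1/2) + ENNReal.ofReal (a / Real.sqrt (2 * Real.pi * v)) := by
        rw [gauss_half v hv]
        gcongr
        · rw [ENNReal.ofReal_div_of_pos two_pos]; simp
    _ = ENNReal.ofReal (1/2 + a / Real.sqrt (2 * Real.pi * v)) := by
        rw [ENNReal.ofReal_add (by norm_num) (by positivity)]

lemma aux_integral_meas {α : Type} [mα : MeasurableSpace α] (t : ℝ)
    (f : Set.Iic t × α → ℝ) (hf : StronglyMeasurable f) :
    StronglyMeasurable fun ω : α =>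
      ∫ u in Set.Ioc (0:ℝ) t, f (⟨min u t, min_le_right u t⟩, ω) := by
  have hg : StronglyMeasurable fun p : ℝ × α => f (⟨min p.1 t, min_le_right p.1 t⟩, p.2) :=
    hf.comp_measurable
      (Measurable.prodMk ((measurable_fst.min measurable_const).subtype_mk) measurable_snd)
  exact hg.integral_prod_left' (μ := volume.restrict (Set.Ioc 0 t))

lemma aux_section_meas {α : Type} [mα : MeasurableSpace α] (t : ℝ)
    (f : Set.Iic t × α → ℝ) (hf : StronglyMeasurable f) (ω : α) :
    StronglyMeasurable fun u : ℝ => f (⟨min u t, min_le_right u t⟩, ω) :=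
  hf.comp_measurable
    (Measurable.prodMk ((measurable_id.min measurable_const).subtype_mk) measurable_const)

lemma drift_meas {Ωa : Type} [mΩ : MeasurableSpace Ωa] (F : Filtration ℝ mΩ)
    (μ : ℝ → Ωa → ℝ) (hμ : ProgMeasurable F μ) (t : ℝ) (ht : 0 ≤ t) :
    StronglyMeasurable[F t] fun ω => ∫ u in (0:ℝ)..t, μ u ω := by
  have h := aux_integral_meas (mα := F t) t (fun p => μ p.1 p.2) (hμ t)
  have heq : (fun ω => ∫ u in (0:ℝ)..t, μ u ω) =
      fun ω : Ωa => ∫ u in Set.Ioc (0:ℝ) t, μ (min u t) ω := by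
    funext ω
    rw [intervalIntegral.integral_of_le ht]
    refine setIntegral_congr_fun measurableSet_Ioc fun u hu => ?_
    rw [min_eq_left hu.2]
  rw [heq]
  exact h

/-- Second step in the proof of the paper's Lemma 5.2 (constant diffusion coefficient):
if `σ ≥ c > 0` and `|μ_t| ≤ √ε` a.s. on `[0,1]`, then for every `x ≥ 0`,
`P(X₁ > x) ≥ (1/2 − √ε/(c√(2π)))·P(sup_{t∈[0,1]} X_t > x)`,
where `X_t = ∫₀^t μ_u du + σ B_t`. -/
theorem stmt14 (Ω : Type) [mΩ : MeasurableSpace Ω] (P : Measure Ω) [IsProbabilityMeasure P]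
    (F : Filtration ℝ mΩ) (B μ : ℝ → Ω → ℝ) (σ c : ℝ) (hc : 0 < c) (hcσ : c ≤ σ)
    (hBcont : ∀ ω, Continuous fun t => B t ω)
    (hB0 : ∀ ω, B 0 ω = 0)
    (hBadapted : Adapted F B)
    (hBlaw : ∀ s t : ℝ, 0 ≤ s → s ≤ t → t ≤ 1 →
      Measure.map (fun ω => B t ω - B s ω) P = gaussianReal 0 ((t - s).toNNReal))
    (hBindep : ∀ s t : ℝ, 0 ≤ s → s ≤ t → t ≤ 1 →
      Indep (MeasurableSpace.comap (fun ω => B t ω - B s ω)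
        (inferInstance : MeasurableSpace ℝ)) (F s) P)
    (hμ : ProgMeasurable F μ)
    (ε : ℝ) (hε : 0 ≤ ε)
    (hdrift : ∀ᵐ ω ∂P, ∀ t ∈ Icc (0 : ℝ) 1, |μ t ω| ≤ Real.sqrt ε)
    (x : ℝ) (hx : 0 ≤ x) :
    ENNReal.ofReal (1 / 2 - Real.sqrt ε / (c * Real.sqrt (2 * Real.pi))) *
        P {ω | x <
          sSup ((fun t => (∫ u in (0 : ℝ)..t, μ u ω) + σ * B t ω) '' Icc (0 : ℝ) 1)}
      ≤ P {ω | x < (∫ u in (0 : ℝ)..1, μ u ω) + σ * B 1 ω} := by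
  classical
  set δ : ℝ := Real.sqrt ε / (c * Real.sqrt (2 * Real.pi)) with hδdef
  have hδ0 : 0 ≤ δ := by positivity
  rcases le_or_gt (1/2 : ℝ) δ with hδhalf | hδhalf
  · rw [ENNReal.ofReal_eq_zero.2 (by linarith), zero_mul]
    exact zero_le
  set r : ℝ≥0∞ := ENNReal.ofReal (1/2 - δ) with hrdef
  set q : ℝ≥0∞ := ENNReal.ofReal (1/2 + δ) with hqdef
  have hrq : r + q = 1 := by
    rw [hrdef, hqdef, ← ENNReal.ofReal_add (by linarith) (by linarith)]
    norm_num
  have hq1 : q ≤ 1 := by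
    rw [hqdef, ← ENNReal.ofReal_one]
    exact ENNReal.ofReal_le_ofReal (by linarith)
  have σpos : (0:ℝ) < σ := lt_of_lt_of_le hc hcσ
  -- null set where drift bound fails
  set N : Set Ω := {ω | ¬ ∀ t ∈ Icc (0:ℝ) 1, |μ t ω| ≤ Real.sqrt ε} with hNdef
  have hPN : P N = 0 := ae_iff.1 hdrift
  -- measurability of X t
  have hXm : ∀ t : ℝ, 0 ≤ t →
      Measurable[F t] fun ω => (∫ u in (0:ℝ)..t, μ u ω) + σ * B t ω := by
    intro t ht
    exact ((drift_meas F μ hμ t ht).measurable).add ((hBadapted t).const_mul σ)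
  -- the events
  set S : ℝ → Set Ω := fun t => {ω | x < (∫ u in (0:ℝ)..t, μ u ω) + σ * B t ω} with hSdef
  have hSmF : ∀ t : ℝ, 0 ≤ t → MeasurableSet[F t] (S t) := by
    intro t ht
    exact (hXm t ht) measurableSet_Ioi
  have hSm : ∀ t : ℝ, 0 ≤ t → MeasurableSet (S t) := fun t ht => F.le t _ (hSmF t ht)
  -- modified drift path for each ω: measurable section
  have hsec : ∀ ω : Ω, StronglyMeasurable fun u : ℝ => μ (min u 1) ω := fun ω =>
    aux_section_meas (mα := F 1) 1 (fun p => μ p.1 p.2) (hμ 1) ω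
  -- path-level facts for good ω
  set M : Ω → ℝ → ℝ := fun ω => (Set.Icc (0:ℝ) 1).indicator (fun u => μ (min u 1) ω) with hMdef
  have hMint : ∀ ω ∉ N, Integrable (M ω) := by
    intro ω hω
    simp only [hNdef, mem_setOf_eq, not_not] at hω
    have hion : IntegrableOn (fun u : ℝ => μ (min u 1) ω) (Set.Icc 0 1) := by
      refine Integrable.mono' (g := fun _ => Real.sqrt ε)
        (integrableOn_const (by simp [Real.volume_Icc]) (by simp))
        (hsec ω).aestronglyMeasurable.restrict ?_
      filter_upwards [ae_restrict_mem measurableSet_Icc] with u hu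
      rw [Real.norm_eq_abs, min_eq_left hu.2]
      exact hω u hu
    exact hion.integrable_indicator measurableSet_Icc
  have hMeq : ∀ ω ∉ N, ∀ t ∈ Icc (0:ℝ) 1,
      (∫ u in (0:ℝ)..t, μ u ω) = ∫ u in (0:ℝ)..t, M ω u := by
    intro ω hω t ht
    refine intervalIntegral.integral_congr ?_
    rw [Set.uIcc_of_le ht.1]
    intro u hu
    have hu01 : u ∈ Icc (0:ℝ) 1 := ⟨hu.1, hu.2.trans ht.2⟩
    simp only [hMdef, Set.indicator_of_mem hu01, min_eq_left hu01.2]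
  have hMbound : ∀ ω ∉ N, ∀ s ∈ Icc (0:ℝ) 1,
      |∫ u in s..1, M ω u| ≤ Real.sqrt ε * (1 - s) := by
    intro ω hω s hs
    simp only [hNdef, mem_setOf_eq, not_not] at hω
    rw [← Real.norm_eq_abs]
    have hb : ∀ u ∈ Set.uIoc s 1, ‖M ω u‖ ≤ Real.sqrt ε := by
      intro u hu
      rw [Set.uIoc_of_le hs.2] at hu
      have hu01 : u ∈ Icc (0:ℝ) 1 := ⟨le_of_lt (lt_of_le_of_lt hs.1 hu.1), hu.2⟩
      simp only [hMdef, Set.indicator_of_mem hu01, Real.norm_eq_abs, min_eq_left hu01.2]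
      exact hω u hu01
    calc ‖∫ u in s..1, M ω u‖ ≤ Real.sqrt ε * |1 - s| :=
          intervalIntegral.norm_integral_le_of_norm_le_const hb
      _ = Real.sqrt ε * (1 - s) := by rw [abs_of_nonneg (by linarith [hs.2])]
  have hMadd : ∀ ω ∉ N, ∀ s ∈ Icc (0:ℝ) 1,
      (∫ u in (0:ℝ)..1, M ω u) = (∫ u in (0:ℝ)..s, M ω u) + ∫ u in s..1, M ω u := by
    intro ω hω s hs
    exact (intervalIntegral.integral_add_adjacent_intervals
      (hMint ω hω).intervalIntegrable (hMint ω hω).intervalIntegrable).symm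
  -- the dyadic events
  set E : ℕ → Set Ω := fun n => ⋃ k ∈ Finset.range (2^n + 1), S ((k:ℝ)/(2:ℝ)^n) with hEdef
  set A : ℕ → ℕ → Set Ω :=
    fun n k => S ((k:ℝ)/(2:ℝ)^n) ∩ ⋂ j ∈ Finset.range k, (S ((j:ℝ)/(2:ℝ)^n))ᶜ with hAdef
  -- core per-n estimate
  have hr1 : r ≤ 1 := by
    rw [hrdef, ← ENNReal.ofReal_one]
    exact ENNReal.ofReal_le_ofReal (by linarith)
  have hcore : ∀ n : ℕ, r * P (E n) ≤ P (S 1) := by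
    intro n
    have hS1m : MeasurableSet (S 1) := hSm 1 zero_le_one
    have hAmF : ∀ k : ℕ, MeasurableSet[F ((k:ℝ)/(2:ℝ)^n)] (A n k) := by
      intro k
      refine ((hSmF _ (by positivity))).inter ?_
      refine MeasurableSet.biInter (Finset.range k).countable_toSet (fun j hj => ?_)
      have hle : (j:ℝ)/(2:ℝ)^n ≤ (k:ℝ)/(2:ℝ)^n := by
        have hj' : (j:ℝ) ≤ (k:ℝ) := by
          exact_mod_cast le_of_lt (Finset.mem_range.1 hj)
        gcongr
      exact (F.mono hle _ (hSmF _ (by positivity))).compl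
    have hAm : ∀ k : ℕ, MeasurableSet (A n k) := fun k => F.le _ _ (hAmF k)
    have hkey : ∀ i j : ℕ, i < j → Disjoint (A n i) (A n j) := by
      intro i j h
      refine Set.disjoint_left.2 fun ω hωi hωj => ?_
      have h1 : ω ∈ S ((i:ℝ)/(2:ℝ)^n) := hωi.1
      have h2 : ω ∉ S ((i:ℝ)/(2:ℝ)^n) := by
        have h3 := hωj.2
        simp only [Set.mem_iInter, Set.mem_compl_iff] at h3
        exact h3 i (Finset.mem_range.2 h)
      exact h2 h1
    have hdisj : (↑(Finset.range (2^n+1)) : Set ℕ).PairwiseDisjoint (A n) := by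
      intro i _ j _ hij
      rcases lt_or_gt_of_ne hij with h | h
      · exact hkey i j h
      · exact (hkey j i h).symm
    have hunion : ⋃ k ∈ Finset.range (2^n+1), A n k = E n := by
      apply Set.Subset.antisymm
      · intro ω hω
        simp only [Set.mem_iUnion, exists_prop] at hω
        obtain ⟨k, hk, hmem⟩ := hω
        simp only [hEdef, Set.mem_iUnion, exists_prop]
        exact ⟨k, hk, hmem.1⟩
      · intro ω hω
        simp only [hEdef, Set.mem_iUnion, exists_prop] at hω
        obtain ⟨k0, hk0, hmem⟩ := hω
        have hex : ∃ k : ℕ, ω ∈ S ((k:ℝ)/(2:ℝ)^n) := ⟨k0, hmem⟩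
        simp only [Set.mem_iUnion, exists_prop]
        refine ⟨Nat.find hex, Finset.mem_range.2
          (lt_of_le_of_lt (Nat.find_min' hex hmem) (Finset.mem_range.1 hk0)), ?_⟩
        refine ⟨Nat.find_spec hex, ?_⟩
        simp only [Set.mem_iInter, Set.mem_compl_iff]
        intro j hj
        exact Nat.find_min hex (Finset.mem_range.1 hj)
    have hk_est : ∀ k ∈ Finset.range (2^n+1), r * P (A n k) ≤ P (A n k ∩ S 1) := by
      intro k hkr
      rw [Finset.mem_range, Nat.lt_succ_iff] at hkr
      rcases Nat.eq_zero_or_pos k with hk0 | hkpos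
      · subst hk0
        have hA0 : A n 0 = ∅ := by
          apply Set.eq_empty_iff_forall_notMem.2
          intro ω hω
          have h1 : ω ∈ S (((0:ℕ):ℝ)/(2:ℝ)^n) := hω.1
          have h2 : (((0:ℕ):ℝ)/(2:ℝ)^n) = 0 := by simp
          rw [h2] at h1
          have h3 : x < (∫ u in (0:ℝ)..(0:ℝ), μ u ω) + σ * B 0 ω := h1
          rw [intervalIntegral.integral_same, hB0 ω, mul_zero, add_zero] at h3
          exact absurd h3 (not_lt.2 hx)
        rw [hA0]
        simp
      rcases eq_or_lt_of_le hkr with hkeq | hklt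
      · have heq1 : ((k:ℝ)/(2:ℝ)^n) = 1 := by
          rw [hkeq]
          rw [div_eq_one_iff_eq (by positivity)]
          push_cast
          ring
        have hsub : A n k ⊆ S 1 := by
          intro ω hω
          have h1 : ω ∈ S ((k:ℝ)/(2:ℝ)^n) := hω.1
          rwa [heq1] at h1
        calc r * P (A n k) ≤ 1 * P (A n k) := mul_le_mul_left hr1 _
          _ = P (A n k ∩ S 1) := by rw [one_mul, Set.inter_eq_self_of_subset_left hsub]
      · -- main case : 0 < k < 2^n
        set s : ℝ := (k:ℝ)/(2:ℝ)^n with hsdef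
        have hs0 : 0 ≤ s := by positivity
        have hs1 : s < 1 := by
          rw [hsdef, div_lt_one (by positivity)]
          exact_mod_cast hklt
        have hv0 : (0:ℝ) < 1 - s := by linarith
        set a : ℝ := Real.sqrt ε * (1 - s) / σ with hadef
        have ha0 : 0 ≤ a := by positivity
        set T : Set Ω := (fun ω => B 1 ω - B s ω) ⁻¹' (Set.Iic a) with hTdef
        have hsub : A n k ∩ (S 1)ᶜ ⊆ (A n k ∩ T) ∪ N := by
          rintro ω ⟨hωA, hωS⟩
          by_cases hωN : ω ∈ N
          · exact Or.inr hωN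
          left
          refine ⟨hωA, ?_⟩
          have hxs : x < (∫ u in (0:ℝ)..s, μ u ω) + σ * B s ω := hωA.1
          have hx1 : (∫ u in (0:ℝ)..1, μ u ω) + σ * B 1 ω ≤ x := not_lt.1 hωS
          have e1 : (∫ u in (0:ℝ)..1, μ u ω)
              = (∫ u in (0:ℝ)..s, μ u ω) + ∫ u in s..1, M ω u := by
            rw [hMeq ω hωN 1 ⟨zero_le_one, le_refl 1⟩, hMadd ω hωN s ⟨hs0, hs1.le⟩,
              ← hMeq ω hωN s ⟨hs0, hs1.le⟩]
          have hbd := hMbound ω hωN s ⟨hs0, hs1.le⟩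
          have habs := abs_le.1 hbd
          show B 1 ω - B s ω ≤ a
          rw [hadef, le_div_iff₀ σpos]
          nlinarith [habs.1, habs.2]
        have hind := (Indep_iff _ _ _).1 (hBindep s 1 hs0 hs1.le le_rfl)
        have hTmem : MeasurableSet[MeasurableSpace.comap (fun ω => B 1 ω - B s ω)
            (inferInstance : MeasurableSpace ℝ)] T := ⟨Set.Iic a, measurableSet_Iic, rfl⟩
        have hmul : P (T ∩ A n k) = P T * P (A n k) := hind T (A n k) hTmem (hAmF k)
        have hΔmeas : Measurable fun ω => B 1 ω - B s ω :=
          (((hBadapted 1)).mono (F.le 1) le_rfl).sub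
            (((hBadapted s)).mono (F.le s) le_rfl)
        have hPT : P T ≤ q := by
          have hmap := hBlaw s 1 hs0 hs1.le le_rfl
          have hPTeq : P T = (gaussianReal 0 ((1 - s).toNNReal)) (Set.Iic a) := by
            rw [hTdef, ← hmap, Measure.map_apply hΔmeas measurableSet_Iic]
          rw [hPTeq]
          have hvne : ((1 - s).toNNReal) ≠ 0 := by
            simp only [ne_eq, Real.toNNReal_eq_zero, not_le]
            linarith
          refine le_trans (gauss_Iic_le _ hvne a ha0) ?_
          rw [hqdef]
          apply ENNReal.ofReal_le_ofReal
          have hcoe : (((1 - s).toNNReal : ℝ≥0) : ℝ) = 1 - s := Real.coe_toNNReal _ (by linarith)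
          rw [hcoe]
          have hsv_sq : Real.sqrt (1-s) * Real.sqrt (1-s) = 1-s := Real.mul_self_sqrt hv0.le
          have hsv1 : Real.sqrt (1-s) ≤ 1 := Real.sqrt_le_one.2 (by linarith)
          have hsvpos : 0 < Real.sqrt (1-s) := Real.sqrt_pos.2 hv0
          have h2π : (0:ℝ) < Real.sqrt (2*Real.pi) := Real.sqrt_pos.2 (by positivity)
          have key : a / Real.sqrt (2 * Real.pi * (1-s)) ≤ δ := by
            have hden : Real.sqrt (2 * Real.pi * (1-s))
                = Real.sqrt (2*Real.pi) * Real.sqrt (1-s) :=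
              Real.sqrt_mul (by positivity) _
            have heq : a / Real.sqrt (2 * Real.pi * (1-s))
                = Real.sqrt ε * Real.sqrt (1-s) / (σ * Real.sqrt (2*Real.pi)) := by
              rw [hden, hadef, div_div, div_eq_div_iff (by positivity) (by positivity)]
              linear_combination (-(Real.sqrt ε * σ * Real.sqrt (2*Real.pi))) * hsv_sq
            rw [heq, hδdef]
            have h1 : Real.sqrt ε * Real.sqrt (1-s) ≤ Real.sqrt ε := by
              nlinarith [Real.sqrt_nonneg ε, hsv1, hsvpos.le]
            have h2 : c * Real.sqrt (2*Real.pi) ≤ σ * Real.sqrt (2*Real.pi) := by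
              nlinarith [h2π]
            exact div_le_div₀ (Real.sqrt_nonneg ε) h1 (by positivity) h2
          linarith
        have hfin : P (A n k ∩ (S 1)ᶜ) ≤ q * P (A n k) := by
          calc P (A n k ∩ (S 1)ᶜ) ≤ P ((A n k ∩ T) ∪ N) := measure_mono hsub
            _ ≤ P (A n k ∩ T) + P N := measure_union_le _ _
            _ = P (T ∩ A n k) := by rw [hPN, add_zero, Set.inter_comm]
            _ = P T * P (A n k) := hmul
            _ ≤ q * P (A n k) := mul_le_mul_left hPT _
        have hsplit : P (A n k ∩ S 1) + P (A n k \ S 1) = P (A n k) :=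
          measure_inter_add_diff _ hS1m
        have hone : r * P (A n k) + q * P (A n k) = P (A n k) := by
          rw [← add_mul, hrq, one_mul]
        have hle2 : r * P (A n k) + q * P (A n k) ≤ P (A n k ∩ S 1) + q * P (A n k) := by
          rw [hone]
          calc P (A n k) = P (A n k ∩ S 1) + P (A n k \ S 1) := hsplit.symm
            _ ≤ P (A n k ∩ S 1) + q * P (A n k) := by
                rw [Set.diff_eq]
                exact add_le_add_right hfin _
        have hqfin : q * P (A n k) ≠ ⊤ :=
          ENNReal.mul_ne_top ENNReal.ofReal_ne_top (measure_ne_top P _)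
        exact (ENNReal.add_le_add_iff_right hqfin).1 hle2
    calc r * P (E n) = r * ∑ k ∈ Finset.range (2^n+1), P (A n k) := by
          rw [← hunion, measure_biUnion_finset hdisj (fun k _ => hAm k)]
      _ = ∑ k ∈ Finset.range (2^n+1), r * P (A n k) := by rw [Finset.mul_sum]
      _ ≤ ∑ k ∈ Finset.range (2^n+1), P (A n k ∩ S 1) := Finset.sum_le_sum hk_est
      _ = P (⋃ k ∈ Finset.range (2^n+1), (A n k ∩ S 1)) := by
          rw [measure_biUnion_finset (hdisj.mono_on ?_) (fun k _ => (hAm k).inter hS1m)]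
          intro k hk
          exact Set.inter_subset_left
      _ ≤ P (S 1) := measure_mono (Set.iUnion₂_subset fun k _ => Set.inter_subset_right)
  -- limit
  have hmono : Monotone E := by
    apply monotone_nat_of_le_succ
    intro n ω hω
    simp only [hEdef, Set.mem_iUnion, exists_prop] at hω ⊢
    obtain ⟨k, hk, hmem⟩ := hω
    refine ⟨2*k, ?_, ?_⟩
    · simp only [Finset.mem_range] at hk ⊢
      have h2 : 2^(n+1) = 2 * 2^n := pow_succ' 2 n
      omega
    · have hcast : ((2*k : ℕ):ℝ)/(2:ℝ)^(n+1) = (k:ℝ)/(2:ℝ)^n := by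
        push_cast
        rw [pow_succ]
        field_simp
      rwa [hcast]
  have hsupsub : {ω | x <
      sSup ((fun t => (∫ u in (0 : ℝ)..t, μ u ω) + σ * B t ω) '' Icc (0 : ℝ) 1)}
      ⊆ (⋃ n, E n) ∪ N := by
    intro ω hω
    by_cases hωN : ω ∈ N
    · exact Or.inr hωN
    left
    simp only [mem_setOf_eq] at hω
    obtain ⟨t, ht, hxt⟩ : ∃ t ∈ Icc (0:ℝ) 1, x < (∫ u in (0:ℝ)..t, μ u ω) + σ * B t ω := by
      by_contra hcon
      push_neg at hcon
      have hub : sSup ((fun t => (∫ u in (0:ℝ)..t, μ u ω) + σ * B t ω) '' Icc (0:ℝ) 1) ≤ x :=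
        Real.sSup_le (by rintro y ⟨t, ht, rfl⟩; exact hcon t ht) hx
      exact absurd hω (not_lt.2 hub)
    set g : ℝ → ℝ := fun u => (∫ v in (0:ℝ)..u, M ω v) + σ * B u ω with hgdef
    have hgcont : Continuous g :=
      ((hMint ω hωN).continuous_primitive 0).add (continuous_const.mul (hBcont ω))
    have hgt : x < g t := by
      rw [hgdef]
      simpa only [← hMeq ω hωN t ht] using hxt
    set K : ℕ → ℕ := fun n => ⌈t * 2^n⌉₊ with hKdef
    have hK_le : ∀ n, K n ≤ 2^n := by
      intro n
      refine Nat.ceil_le.2 ?_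
      calc t * 2^n ≤ 1 * 2^n := by
            have : (0:ℝ) < 2^n := by positivity
            nlinarith [ht.2]
        _ = ((2^n : ℕ):ℝ) := by push_cast; ring
    have hq_ge : ∀ n, t ≤ (K n : ℝ)/(2:ℝ)^n := by
      intro n
      rw [le_div_iff₀ (by positivity)]
      exact Nat.le_ceil _
    have hq_le : ∀ n, (K n : ℝ)/(2:ℝ)^n ≤ t + (1/2)^n := by
      intro n
      rw [div_le_iff₀ (by positivity)]
      have h1 : ((⌈t * 2^n⌉₊ : ℕ) : ℝ) < t * 2^n + 1 :=
        Nat.ceil_lt_add_one (mul_nonneg ht.1 (by positivity))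
      have h2 : ((1:ℝ)/2)^n * 2^n = 1 := by
        rw [div_pow, one_pow, div_mul_cancel₀]
        positivity
      nlinarith
    have hq_mem : ∀ n, ((K n : ℝ)/(2:ℝ)^n) ∈ Icc (0:ℝ) 1 := by
      intro n
      constructor
      · positivity
      · rw [div_le_one (by positivity)]
        calc ((K n : ℕ):ℝ) ≤ ((2^n : ℕ):ℝ) := by exact_mod_cast hK_le n
          _ = (2:ℝ)^n := by push_cast; ring
    have htend : Tendsto (fun n => (K n:ℝ)/(2:ℝ)^n) atTop (𝓝 t) := by
      have hupper : Tendsto (fun n : ℕ => t + (1/2:ℝ)^n) atTop (𝓝 (t + 0)) :=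
        tendsto_const_nhds.add
          (tendsto_pow_atTop_nhds_zero_of_lt_one (by norm_num) (by norm_num))
      rw [add_zero] at hupper
      exact tendsto_of_tendsto_of_tendsto_of_le_of_le tendsto_const_nhds hupper hq_ge hq_le
    have hgq : Tendsto (fun n => g ((K n:ℝ)/(2:ℝ)^n)) atTop (𝓝 (g t)) :=
      (hgcont.tendsto t).comp htend
    obtain ⟨n, hn⟩ := (hgq.eventually_const_lt hgt).exists
    refine Set.mem_iUnion.2 ⟨n, ?_⟩
    simp only [hEdef, Set.mem_iUnion, exists_prop]
    refine ⟨K n, Finset.mem_range.2 (Nat.lt_succ_of_le (hK_le n)), ?_⟩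
    show x < (∫ u in (0:ℝ)..((K n:ℝ)/(2:ℝ)^n), μ u ω) + σ * B ((K n:ℝ)/(2:ℝ)^n) ω
    rw [hMeq ω hωN _ (hq_mem n)]
    exact hn
  calc r * P {ω | x <
        sSup ((fun t => (∫ u in (0 : ℝ)..t, μ u ω) + σ * B t ω) '' Icc (0 : ℝ) 1)}
      ≤ r * P ((⋃ n, E n) ∪ N) := mul_le_mul_right (measure_mono hsupsub) r
    _ ≤ r * (P (⋃ n, E n) + P N) := mul_le_mul_right (measure_union_le _ _) r
    _ = r * P (⋃ n, E n) := by rw [hPN, add_zero]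
    _ = r * ⨆ n, P (E n) := by rw [hmono.measure_iUnion]
    _ = ⨆ n, r * P (E n) := by rw [ENNReal.mul_iSup]
    _ ≤ P (S 1) := iSup_le hcore
end

section
/- Let ξ be a real random variable with law N(m, σ²), σ > 0, and let x ∈ ℝ. Then sup_{p ∈ ℝ} E[(p − x − ξ) · 1_{ξ > p}] > 0 if and only if x < 0. Moreover, if x ≥ 0 then E[(p − x − ξ) · 1_{ξ > p}] < 0 for every p ∈ ℝ. -/
open MeasureTheory ProbabilityTheory Filter Set

namespace S15

open Real
open scoped ENNReal NNReal

noncomputable def C (σ : ℝ) : ℝ := (Real.sqrt (2 * Real.pi * σ ^ 2))⁻¹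
noncomputable def b (σ : ℝ) : ℝ := (2 * σ ^ 2)⁻¹
noncomputable def φ (m σ : ℝ) : ℝ → ℝ := fun t => C σ * Real.exp (-(b σ) * (t - m) ^ 2)
noncomputable def Q (m σ a : ℝ) : ℝ := ∫ t in Ioi a, φ m σ t
noncomputable def T (m σ p : ℝ) : ℝ := ∫ t in Ioi p, (t - p) * φ m σ t

lemma hC {σ : ℝ} (hσ : 0 < σ) : 0 < C σ := by
  have : 0 < 2 * Real.pi * σ ^ 2 := by positivity
  simp [C, Real.sqrt_pos.mpr this]

lemma hb {σ : ℝ} (hσ : 0 < σ) : 0 < b σ := by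
  have : (0:ℝ) < 2 * σ ^ 2 := by positivity
  exact inv_pos.mpr this

lemma φ_pos {m σ : ℝ} (hσ : 0 < σ) (t : ℝ) : 0 < φ m σ t :=
  mul_pos (hC hσ) (Real.exp_pos _)

lemma φ_eq (m : ℝ) {σ : ℝ} (hσ : 0 < σ) :
    gaussianPDFReal m ((σ ^ 2).toNNReal) = φ m σ := by
  funext t
  have h : (((σ ^ 2).toNNReal) : ℝ) = σ ^ 2 := Real.coe_toNNReal _ (sq_nonneg σ)
  have h2 : -(t - m) ^ 2 / (2 * σ ^ 2) = -(2 * σ ^ 2)⁻¹ * (t - m) ^ 2 := by ring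
  unfold gaussianPDFReal φ C b
  rw [h, h2]

lemma φ_anti {m σ : ℝ} (hσ : 0 < σ) {s t : ℝ} (hs : m ≤ s) (hst : s ≤ t) :
    φ m σ t ≤ φ m σ s := by
  have h1 : (s - m) ^ 2 ≤ (t - m) ^ 2 := by nlinarith
  have := hb hσ
  exact mul_le_mul_of_nonneg_left (Real.exp_le_exp.mpr (by nlinarith)) (hC hσ).le

lemma integrable_φ (m : ℝ) {σ : ℝ} (hσ : 0 < σ) : Integrable (φ m σ) := by
  have h := (integrable_exp_neg_mul_sq (hb hσ)).comp_sub_right m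
  exact (h.const_mul (C σ))

lemma integrable_mul_φ (m : ℝ) {σ : ℝ} (hσ : 0 < σ) :
    Integrable (fun t => (t - m) * φ m σ t) := by
  have h := (integrable_mul_exp_neg_mul_sq (hb hσ)).comp_sub_right m
  have := h.const_mul (C σ)
  refine this.congr (Eventually.of_forall fun t => ?_)
  simp only [φ]
  ring

lemma hasDeriv (m : ℝ) {σ : ℝ} (hσ : 0 < σ) (t : ℝ) :
    HasDerivAt (fun t => -σ ^ 2 * φ m σ t) ((t - m) * φ m σ t) t := by
  have h1 : HasDerivAt (fun t : ℝ => -(b σ) * (t - m) ^ 2) (-(b σ) * (2 * (t - m))) t := by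
    have := (((hasDerivAt_id t).sub_const m).pow 2).const_mul (-(b σ))
    simpa using this
  have h2 := (h1.exp).const_mul (-σ ^ 2 * C σ)
  have hσ' : σ ^ 2 ≠ 0 := by positivity
  convert h2 using 1
  · rfl
  · rfl
  · funext s; simp only [φ]; ring
  · simp only [φ, b]
    field_simp

lemma tends (m : ℝ) {σ : ℝ} (hσ : 0 < σ) :
    Tendsto (fun t => -σ ^ 2 * φ m σ t) atTop (nhds 0) := by
  have h1 : Tendsto (fun t : ℝ => t - m) atTop atTop :=
    tendsto_atTop_add_const_right _ _ tendsto_id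
  have h2 : Tendsto (fun t : ℝ => (t - m) ^ 2) atTop atTop :=
    (tendsto_pow_atTop two_ne_zero).comp h1
  have h3 : Tendsto (fun t : ℝ => -(b σ * (t - m) ^ 2)) atTop atBot :=
    tendsto_neg_atTop_atBot.comp (h2.const_mul_atTop (hb hσ))
  have h4 : Tendsto (fun t : ℝ => Real.exp (-(b σ * (t - m) ^ 2))) atTop (nhds 0) :=
    Real.tendsto_exp_atBot.comp h3
  have := (h4.const_mul (-σ ^ 2 * C σ))
  rw [mul_zero] at this
  refine this.congr fun t => ?_
  simp only [φ, neg_mul]; ring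

lemma J (m : ℝ) {σ : ℝ} (hσ : 0 < σ) (a : ℝ) :
    ∫ t in Ioi a, (t - m) * φ m σ t = σ ^ 2 * φ m σ a := by
  have := integral_Ioi_of_hasDerivAt_of_tendsto' (a := a) (f := fun t => -σ ^ 2 * φ m σ t)
    (fun t _ => hasDeriv m hσ t) ((integrable_mul_φ m hσ).integrableOn) (tends m hσ)
  rw [this]; ring

lemma integrable_sub_mul_φ (m : ℝ) {σ : ℝ} (hσ : 0 < σ) (p : ℝ) :
    Integrable (fun t => (t - p) * φ m σ t) := by
  have h := (integrable_mul_φ m hσ).add ((integrable_φ m hσ).const_mul (m - p))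
  refine h.congr (Eventually.of_forall fun t => ?_)
  simp only [Pi.add_apply]
  ring

lemma Q_nonneg (m : ℝ) {σ : ℝ} (hσ : 0 < σ) (a : ℝ) : 0 ≤ Q m σ a :=
  setIntegral_nonneg measurableSet_Ioi fun t _ => (φ_pos hσ t).le

lemma Q_le_one (m : ℝ) {σ : ℝ} (hσ : 0 < σ) (a : ℝ) : Q m σ a ≤ 1 := by
  have hv : ((σ ^ 2).toNNReal : ℝ≥0) ≠ 0 := by
    refine (Real.toNNReal_pos.mpr (by positivity)).ne'
  have h1 : ∫ t, φ m σ t = 1 := by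
    rw [← φ_eq m hσ]; exact integral_gaussianPDFReal_eq_one m hv
  calc Q m σ a ≤ ∫ t, φ m σ t := by
        refine setIntegral_le_integral (integrable_φ m hσ)
          (Eventually.of_forall fun t => (φ_pos hσ t).le)
    _ = 1 := h1

lemma Q_pos (m : ℝ) {σ : ℝ} (hσ : 0 < σ) (a : ℝ) : 0 < Q m σ a := by
  rw [Q, setIntegral_pos_iff_support_of_nonneg_ae
    (Eventually.of_forall fun t => (φ_pos hσ t).le) (integrable_φ m hσ).integrableOn]
  have h : Ioi a ⊆ Function.support (φ m σ) ∩ Ioi a :=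
    fun t ht => ⟨(φ_pos hσ t).ne', ht⟩
  calc (0 : ℝ≥0∞) < volume (Ioi a) := by simp [Real.volume_Ioi]
    _ ≤ volume (Function.support (φ m σ) ∩ Ioi a) := measure_mono h

lemma T_pos (m : ℝ) {σ : ℝ} (hσ : 0 < σ) (p : ℝ) : 0 < T m σ p := by
  rw [T, setIntegral_pos_iff_support_of_nonneg_ae ?h1
    (integrable_sub_mul_φ m hσ p).integrableOn]
  case h1 =>
    filter_upwards [ae_restrict_mem measurableSet_Ioi] with t ht
    exact mul_nonneg (by simp only [mem_Ioi] at ht; linarith) (φ_pos hσ t).le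
  have h : Ioi p ⊆ Function.support (fun t => (t - p) * φ m σ t) ∩ Ioi p := by
    intro t ht
    simp only [mem_Ioi] at ht
    exact ⟨(mul_pos (by linarith) (φ_pos hσ t)).ne', ht⟩
  calc (0 : ℝ≥0∞) < volume (Ioi p) := by simp [Real.volume_Ioi]
    _ ≤ _ := measure_mono h

lemma decomp (m : ℝ) {σ : ℝ} (hσ : 0 < σ) (p x : ℝ) :
    ∫ t in Ioi p, (p - x - t) * φ m σ t = (-x) * Q m σ p - T m σ p := by
  have h1 : ∀ t : ℝ, (p - x - t) * φ m σ t = (-x) * φ m σ t - (t - p) * φ m σ t := by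
    intro t; ring
  simp_rw [h1]
  rw [integral_sub (((integrable_φ m hσ).const_mul (-x)).integrableOn)
    (integrable_sub_mul_φ m hσ p).integrableOn, integral_const_mul]
  rfl

lemma Q_lower (m : ℝ) {σ : ℝ} (hσ : 0 < σ) {p ε : ℝ} (hp : m ≤ p) (hε : 0 < ε) :
    φ m σ (p + ε) * ε ≤ Q m σ p := by
  have h1 : φ m σ (p + ε) * ε ≤ ∫ t in Ioc p (p + ε), φ m σ t := by
    have := setIntegral_ge_of_const_le_real (μ := volume) (c := φ m σ (p + ε))
      (s := Ioc p (p + ε)) (f := φ m σ) measurableSet_Ioc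
      (by simp [Real.volume_Ioc])
      (fun t ht => φ_anti hσ (le_trans hp ht.1.le) ht.2)
      (integrable_φ m hσ).integrableOn
    simpa [Real.volume_Ioc, ENNReal.toReal_ofReal hε.le, add_sub_cancel_left, hε.le, mul_comm] using this
  refine h1.trans ?_
  exact setIntegral_mono_set (integrable_φ m hσ).integrableOn
    (Eventually.of_forall fun t => (φ_pos hσ t).le)
    (HasSubset.Subset.eventuallyLE Ioc_subset_Ioi_self)

lemma T_upper (m : ℝ) {σ : ℝ} (hσ : 0 < σ) {p δ : ℝ} (hp : m ≤ p) (hδ : 0 < δ) :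
    T m σ p ≤ δ * Q m σ p + σ ^ 2 * φ m σ (p + δ) := by
  have hsplit : Ioi p = Ioc p (p + δ) ∪ Ioi (p + δ) :=
    (Ioc_union_Ioi_eq_Ioi (by linarith)).symm
  have hT : T m σ p = (∫ t in Ioc p (p + δ), (t - p) * φ m σ t)
      + ∫ t in Ioi (p + δ), (t - p) * φ m σ t := by
    rw [T, hsplit]
    exact setIntegral_union (Ioc_disjoint_Ioi le_rfl) measurableSet_Ioi
      (integrable_sub_mul_φ m hσ p).integrableOn (integrable_sub_mul_φ m hσ p).integrableOn
  have hA : (∫ t in Ioc p (p + δ), (t - p) * φ m σ t) ≤ δ * Q m σ p := by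
    calc (∫ t in Ioc p (p + δ), (t - p) * φ m σ t)
        ≤ ∫ t in Ioc p (p + δ), δ * φ m σ t := by
          refine setIntegral_mono_on (integrable_sub_mul_φ m hσ p).integrableOn
            (((integrable_φ m hσ).const_mul δ).integrableOn) measurableSet_Ioc fun t ht => ?_
          exact mul_le_mul_of_nonneg_right (by linarith [ht.2]) (φ_pos hσ t).le
      _ ≤ ∫ t in Ioi p, δ * φ m σ t := by
          refine setIntegral_mono_set ((integrable_φ m hσ).const_mul δ).integrableOn
            (Eventually.of_forall fun t => mul_nonneg hδ.le (φ_pos hσ t).le)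
            (HasSubset.Subset.eventuallyLE Ioc_subset_Ioi_self)
      _ = δ * Q m σ p := by rw [Q, integral_const_mul]
  have hB : (∫ t in Ioi (p + δ), (t - p) * φ m σ t) ≤ σ ^ 2 * φ m σ (p + δ) := by
    calc (∫ t in Ioi (p + δ), (t - p) * φ m σ t)
        ≤ ∫ t in Ioi (p + δ), (t - m) * φ m σ t := by
          refine setIntegral_mono_on (integrable_sub_mul_φ m hσ p).integrableOn
            (integrable_mul_φ m hσ).integrableOn measurableSet_Ioi fun t ht => ?_
          exact mul_le_mul_of_nonneg_right (by linarith) (φ_pos hσ t).le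
      _ = σ ^ 2 * φ m σ (p + δ) := J m hσ (p + δ)
  linarith

lemma exists_pos (m : ℝ) {σ : ℝ} (hσ : 0 < σ) {x : ℝ} (hx : x < 0) :
    ∃ p : ℝ, 0 < ∫ t in Ioi p, (p - x - t) * φ m σ t := by
  set c : ℝ := -x with hc_def
  have hc : 0 < c := by simp [hc_def]; linarith
  set δ : ℝ := c / 2 with hδ_def
  have hδ : 0 < δ := by positivity
  set K : ℝ := c ^ 2 / (8 * σ ^ 2) with hK_def
  have hK : 0 < K := by positivity
  set a : ℝ := max (δ / 2) ((2 * σ ^ 2 / δ) * (1 - Real.log K)) with ha_def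
  set p : ℝ := m + a - δ / 2 with hp_def
  have hmp : m ≤ p := by
    have := le_max_left (δ / 2) ((2 * σ ^ 2 / δ) * (1 - Real.log K))
    rw [hp_def]; linarith
  refine ⟨p, ?_⟩
  rw [decomp m hσ p x, ← hc_def]
  have hσ2 : (0:ℝ) < σ ^ 2 := by positivity
  have hbσ := hb hσ
  have h5 : 1 - Real.log K ≤ b σ * a * δ := by
    have ha := le_max_right (δ / 2) ((2 * σ ^ 2 / δ) * (1 - Real.log K))
    have heq : b σ * ((2 * σ ^ 2 / δ) * (1 - Real.log K)) * δ = 1 - Real.log K := by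
      rw [b]; field_simp
    have h := mul_le_mul_of_nonneg_left ha (mul_pos hbσ hδ).le
    calc 1 - Real.log K = b σ * ((2 * σ ^ 2 / δ) * (1 - Real.log K)) * δ := heq.symm
      _ ≤ b σ * a * δ := by rw [ha_def]; nlinarith [h]
  have hlog : -(b σ * (a * δ + δ ^ 2 / 4)) < Real.log K := by
    nlinarith [mul_pos hbσ (mul_pos hδ hδ)]
  have hexp : Real.exp (-(b σ * (a * δ + δ ^ 2 / 4))) < K := by
    rw [← Real.exp_log hK]
    exact Real.exp_lt_exp.mpr hlog
  have hφδ : φ m σ (p + δ) = φ m σ (p + δ / 2) * Real.exp (-(b σ * (a * δ + δ ^ 2 / 4))) := by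
    simp only [φ]
    rw [mul_assoc, ← Real.exp_add]
    congr 2
    rw [hp_def]
    ring
  have h3 : φ m σ (p + δ) < K * φ m σ (p + δ / 2) := by
    rw [hφδ]
    calc φ m σ (p + δ / 2) * Real.exp (-(b σ * (a * δ + δ ^ 2 / 4)))
        < φ m σ (p + δ / 2) * K := by
          exact mul_lt_mul_of_pos_left hexp (φ_pos hσ _)
      _ = K * φ m σ (p + δ / 2) := mul_comm _ _
  set q : ℝ := Q m σ p with hq_def
  set u : ℝ := φ m σ (p + δ / 2) with hu_def
  have hu : 0 < u := φ_pos hσ _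
  have hq : 0 < q := Q_pos m hσ p
  have h1 : u * (δ / 2) ≤ q := Q_lower m hσ hmp (by positivity)
  have h2 : T m σ p ≤ δ * q + σ ^ 2 * φ m σ (p + δ) := T_upper m hσ hmp hδ
  have B' : σ ^ 2 * φ m σ (p + δ) < c ^ 2 / 8 * u := by
    calc σ ^ 2 * φ m σ (p + δ) < σ ^ 2 * (K * u) := by
          exact mul_lt_mul_of_pos_left h3 hσ2
      _ = (σ ^ 2 * K) * u := by ring
      _ = c ^ 2 / 8 * u := by rw [hK_def]; field_simp
  have A : c ^ 2 / 4 * u ≤ c * q := by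
    have := mul_le_mul_of_nonneg_left h1 hc.le
    rw [hδ_def] at this
    nlinarith [this]
  rw [hδ_def] at h2
  nlinarith [h2, B', A]

end S15

open S15
open scoped ENNReal NNReal

/-- Sign characterization of the expected relative profit from a limit sell order
(underlying the paper's Lemma 6.2): for `ξ ~ N(m, σ²)` and `x ∈ ℝ`,
`sup_{p∈ℝ} E[(p − x − ξ)·1_{ξ > p}] > 0` iff `x < 0`; moreover if `x ≥ 0` then
`E[(p − x − ξ)·1_{ξ > p}] < 0` for every `p`. -/
theorem stmt15 (Ω : Type) [MeasurableSpace Ω] (P : Measure Ω) [IsProbabilityMeasure P]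
    (ξ : Ω → ℝ) (hξ : Measurable ξ) (m σ : ℝ) (hσ : 0 < σ)
    (hlaw : Measure.map ξ P = gaussianReal m ((σ ^ 2).toNNReal)) (x : ℝ) :
    BddAbove (Set.range fun p => ∫ ω in {ω | ξ ω > p}, (p - x - ξ ω) ∂P) ∧
    (0 < sSup (Set.range fun p => ∫ ω in {ω | ξ ω > p}, (p - x - ξ ω) ∂P) ↔ x < 0) ∧
    (0 ≤ x → ∀ p : ℝ, (∫ ω in {ω | ξ ω > p}, (p - x - ξ ω) ∂P) < 0) := by
  have hv : ((σ ^ 2).toNNReal) ≠ 0 := (Real.toNNReal_pos.mpr (by positivity)).ne'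
  set v : ℝ≥0 := (σ ^ 2).toNNReal with hv_def
  have key : ∀ p : ℝ, (∫ ω in {ω | ξ ω > p}, (p - x - ξ ω) ∂P)
      = ∫ t in Ioi p, (p - x - t) * φ m σ t := by
    intro p
    have hsm : AEStronglyMeasurable (fun t : ℝ => p - x - t) (Measure.map ξ P) :=
      (continuous_const.sub continuous_id).aestronglyMeasurable
    have hpre : {ω | ξ ω > p} = ξ ⁻¹' (Ioi p) := rfl
    calc (∫ ω in {ω | ξ ω > p}, (p - x - ξ ω) ∂P)
        = ∫ t in Ioi p, (p - x - t) ∂(Measure.map ξ P) := by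
          rw [hpre, ← setIntegral_map measurableSet_Ioi hsm hξ.aemeasurable]
      _ = ∫ t in Ioi p, (p - x - t) ∂(volume.withDensity (gaussianPDF m v)) := by
          rw [hlaw, gaussianReal_of_var_ne_zero m hv]
      _ = ∫ t in Ioi p, ((gaussianPDFReal m v t).toNNReal : ℝ≥0) • (p - x - t) := by
          have hd : gaussianPDF m v
              = fun t => (((gaussianPDFReal m v t).toNNReal : ℝ≥0) : ℝ≥0∞) := rfl
          rw [hd]
          exact setIntegral_withDensity_eq_setIntegral_smul
            (measurable_gaussianPDFReal m v).real_toNNReal _ measurableSet_Ioi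
      _ = ∫ t in Ioi p, (p - x - t) * φ m σ t := by
          refine setIntegral_congr_fun measurableSet_Ioi fun t _ => ?_
          rw [NNReal.smul_def, Real.coe_toNNReal _ (gaussianPDFReal_nonneg m v t),
            ← congrFun (φ_eq m hσ) t, mul_comm, smul_eq_mul]
  have hub : ∀ p : ℝ, (∫ ω in {ω | ξ ω > p}, (p - x - ξ ω) ∂P) ≤ |x| := by
    intro p
    rw [key p, decomp m hσ p x]
    nlinarith [Q_pos m hσ p, Q_le_one m hσ p, T_pos m hσ p, neg_le_abs x, abs_nonneg x]
  have hbdd : BddAbove (Set.range fun p => ∫ ω in {ω | ξ ω > p}, (p - x - ξ ω) ∂P) := by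
    refine ⟨|x|, ?_⟩
    rintro y ⟨p, rfl⟩
    exact hub p
  have hneg : 0 ≤ x → ∀ p : ℝ, (∫ ω in {ω | ξ ω > p}, (p - x - ξ ω) ∂P) < 0 := by
    intro hx p
    rw [key p, decomp m hσ p x]
    nlinarith [Q_pos m hσ p, T_pos m hσ p]
  refine ⟨hbdd, ⟨?_, ?_⟩, hneg⟩
  · intro hsup
    by_contra hx
    push_neg at hx
    have h0 : sSup (Set.range fun p => ∫ ω in {ω | ξ ω > p}, (p - x - ξ ω) ∂P) ≤ 0 := by
      refine Real.sSup_le ?_ le_rfl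
      rintro y ⟨p, rfl⟩
      exact (hneg hx p).le
    linarith
  · intro hx
    obtain ⟨p, hp⟩ := exists_pos m hσ hx
    have h0 : 0 < (∫ ω in {ω | ξ ω > p}, (p - x - ξ ω) ∂P) := by rw [key p]; exact hp
    exact h0.trans_le (le_csSup hbdd ⟨p, rfl⟩)
end
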